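/- arXiv:2008.07115 — 5 statements merged into one kernel-verified Lean document; each statement's English description precedes it below -/
import Mathlib

section
/- Let E be a complex Banach space, let T and P be continuous linear operators on E with P ∘ P = P, and let c ∈ ℂ. If T ∘ T − c² • P is a compact operator, then every accumulation point of the spectrum of T belongs to the set {0, c, −c}. -/
open Filter

section Aux

open Metric Polynomial

variable {E : Type*} [NormedAddCommGroup E] [NormedSpace ℂ E]

/-- Riesz-lemma style step keeping track of the ambient subspace. -/
lemma riesz_step {F G : Submodule ℂ E} (hFG : F ≤ G) (hFc : IsClosed (F : Set E))
    {v : E} (hvG : v ∈ G) (hvF : v ∉ F) :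
    ∃ x : E, x ∈ G ∧ ‖x‖ = 1 ∧ ∀ y ∈ F, (2⁻¹ : ℝ) ≤ ‖x - y‖ := by
  set d := Metric.infDist v (F : Set E) with hd_def
  have hFn : (F : Set E).Nonempty := ⟨0, F.zero_mem⟩
  have hd0 : 0 < d := by
    rcases lt_or_eq_of_le (Metric.infDist_nonneg (x := v) (s := (F : Set E))) with h | h
    · exact h
    · exact absurd ((hFc.mem_iff_infDist_zero hFn).2 h.symm) hvF
  obtain ⟨y₀, hy₀F, hy₀⟩ : ∃ y ∈ (F : Set E), dist v y < 2 * d := by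
    refine (Metric.infDist_lt_iff hFn).mp ?_
    linarith
  set x₀ := v - y₀ with hx₀_def
  have hx₀G : x₀ ∈ G := G.sub_mem hvG (hFG hy₀F)
  have hlow : ∀ y ∈ F, d ≤ ‖x₀ - y‖ := by
    intro y hy
    have : dist v (y₀ + y) ≥ d := Metric.infDist_le_dist_of_mem (F.add_mem hy₀F hy)
    calc d ≤ dist v (y₀ + y) := this
      _ = ‖x₀ - y‖ := by rw [dist_eq_norm, hx₀_def, sub_sub]
  have hx₀norm : ‖x₀‖ < 2 * d := by
    rw [hx₀_def, ← dist_eq_norm]; exact hy₀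
  have hx₀pos : 0 < ‖x₀‖ := by
    have := hlow 0 F.zero_mem
    simp only [sub_zero] at this
    linarith
  set cnorm : ℂ := (‖x₀‖ : ℂ) with hc_def
  have hcne : cnorm ≠ 0 := by
    simpa [hc_def] using (ne_of_gt hx₀pos)
  refine ⟨cnorm⁻¹ • x₀, G.smul_mem _ hx₀G, ?_, ?_⟩
  · rw [norm_smul, norm_inv]
    simp only [hc_def, Complex.norm_real, Real.norm_eq_abs, abs_of_pos hx₀pos]
    field_simp
  · intro y hy
    have hrw : cnorm⁻¹ • x₀ - y = cnorm⁻¹ • (x₀ - cnorm • y) := by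
      rw [smul_sub (cnorm⁻¹) x₀ (cnorm • y), inv_smul_smul₀ hcne]
    have hmem : cnorm • y ∈ F := F.smul_mem _ hy
    have := hlow _ hmem
    rw [hrw, norm_smul, norm_inv]
    have hcnorm : ‖cnorm‖ = ‖x₀‖ := by
      simp [hc_def, abs_of_pos hx₀pos]
    rw [hcnorm, le_inv_mul_iff₀ hx₀pos]
    linarith

lemma eig_finite (Q : E →L[ℂ] E) (hQ : IsCompactOperator ⇑Q) {δ : ℝ} (hδ : 0 < δ) :
    {p : ℂ | δ ≤ ‖p‖ ∧ ∃ v : E, v ≠ 0 ∧ Q v = p • v}.Finite := by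
  by_contra hinf
  rw [← Set.not_infinite, not_not] at hinf
  obtain f := hinf.natEmbedding
  set lam : ℕ → ℂ := fun n => (f n : ℂ) with hlam_def
  have hlaminj : Function.Injective lam := fun a b h => f.injective (Subtype.ext h)
  have hlamδ : ∀ n, δ ≤ ‖lam n‖ := fun n => (f n).2.1
  have hlamne : ∀ n, lam n ≠ 0 := fun n => by
    intro h; have := hlamδ n; rw [h] at this; simp at this; linarith
  have hex : ∀ n, ∃ v : E, v ≠ 0 ∧ Q v = lam n • v := fun n => (f n).2.2
  choose e he0 heq using hex
  -- linear independence of the eigenvectors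
  have hli : LinearIndependent ℂ e := by
    apply Module.End.eigenvectors_linearIndependent' (Q : E →ₗ[ℂ] E) lam hlaminj
    intro i
    exact ⟨Module.End.mem_eigenspace_iff.2 (heq i), he0 i⟩
  -- the nested spans
  set Y : ℕ → Submodule ℂ E := fun n => Submodule.span ℂ (e '' Set.Iio n) with hY_def
  have hYmono : ∀ {m n : ℕ}, m ≤ n → Y m ≤ Y n := fun {m n} h =>
    Submodule.span_mono (Set.image_mono (fun x hx => lt_of_lt_of_le hx h))
  have hYclosed : ∀ n, IsClosed ((Y n : Set E)) := by
    intro n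
    have hfin : (e '' Set.Iio n).Finite := (Set.finite_Iio n).image e
    haveI := FiniteDimensional.span_of_finite ℂ hfin
    exact (Y n).closed_of_finiteDimensional
  have hnotmem : ∀ n, e n ∉ Y n := fun n =>
    hli.notMem_span_image (by simp)
  have hmem : ∀ n, e n ∈ Y (n + 1) :=
    fun n => Submodule.subset_span ⟨n, by simp, rfl⟩
  have hQY : ∀ n, ∀ w ∈ Y n, Q w ∈ Y n := by
    intro n
    have : Y n ≤ (Y n).comap (Q : E →ₗ[ℂ] E) := by
      rw [hY_def, Submodule.span_le]
      rintro _ ⟨i, hi, rfl⟩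
      simp only [Set.mem_preimage, SetLike.mem_coe, Submodule.mem_comap,
        ContinuousLinearMap.coe_coe]
      rw [heq i]
      exact (Y n).smul_mem _ (Submodule.subset_span ⟨i, hi, rfl⟩)
    exact fun w hw => this hw
  have hQlam : ∀ n, ∀ w ∈ Y (n + 1), Q w - lam n • w ∈ Y n := by
    intro n
    set L : E →ₗ[ℂ] E := (Q : E →ₗ[ℂ] E) - lam n • LinearMap.id with hL_def
    have : Y (n + 1) ≤ (Y n).comap L := by
      rw [hY_def, Submodule.span_le]
      rintro _ ⟨i, hi, rfl⟩
      simp only [Set.mem_preimage, SetLike.mem_coe, Submodule.mem_comap]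
      have : L (e i) = (lam i - lam n) • e i := by
        simp [hL_def, heq i, sub_smul]
      rw [this]
      rcases Nat.lt_succ_iff_lt_or_eq.1 hi with h | h
      · exact (Y n).smul_mem _ (Submodule.subset_span ⟨i, h, rfl⟩)
      · subst h; simp
    intro w hw
    have := this hw
    simpa [hL_def] using this
  -- the Riesz sequence
  have hx : ∀ n, ∃ x : E, x ∈ Y (n + 1) ∧ ‖x‖ = 1 ∧ ∀ y ∈ Y n, (2⁻¹ : ℝ) ≤ ‖x - y‖ :=
    fun n => riesz_step (hYmono (Nat.le_succ n)) (hYclosed n) (hmem n) (hnotmem n)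
  choose x hxmem hxnorm hxdist using hx
  -- separation of the images
  have hsep : ∀ m n : ℕ, m < n → 2⁻¹ * δ ≤ ‖Q (x n) - Q (x m)‖ := by
    intro m n hmn
    have hu : Q (x n) - lam n • x n ∈ Y n := hQlam n (x n) (hxmem n)
    have hv : Q (x m) ∈ Y n := by
      have := hQY (m + 1) (x m) (hxmem m)
      exact hYmono (Nat.succ_le_of_lt hmn) this
    set y : E := (lam n)⁻¹ • (Q (x m) - (Q (x n) - lam n • x n)) with hy_def
    have hyY : y ∈ Y n := (Y n).smul_mem _ ((Y n).sub_mem hv hu)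
    have hkey : Q (x n) - Q (x m) = lam n • (x n - y) := by
      rw [hy_def, smul_sub, smul_inv_smul₀ (hlamne n)]
      abel
    rw [hkey, norm_smul]
    have h1 := hxdist n y hyY
    have h2 := hlamδ n
    calc 2⁻¹ * δ ≤ ‖lam n‖ * 2⁻¹ := by linarith [mul_le_mul_of_nonneg_left h2 (by norm_num : (0:ℝ) ≤ 2⁻¹)]
      _ ≤ ‖lam n‖ * ‖x n - y‖ := by
          apply mul_le_mul_of_nonneg_left h1 (norm_nonneg _)
  -- compactness contradiction
  have hK : IsCompact (closure (⇑Q '' Metric.closedBall 0 1)) :=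
    hQ.isCompact_closure_image_closedBall 1
  have hmemK : ∀ n, Q (x n) ∈ closure (⇑Q '' Metric.closedBall 0 1) := by
    intro n
    apply subset_closure
    exact ⟨x n, by simp [hxnorm n], rfl⟩
  obtain ⟨y₀, -, φ, hφ, hconv⟩ := hK.tendsto_subseq hmemK
  have hcauchy : CauchySeq ((fun n => Q (x n)) ∘ φ) := hconv.cauchySeq
  obtain ⟨N, hN⟩ := Metric.cauchySeq_iff'.1 hcauchy (2⁻¹ * δ) (by positivity)
  have h1 := hN (N + 1) (Nat.le_succ N)
  have h2 := hsep (φ N) (φ (N + 1)) (hφ (Nat.lt_succ_self N))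
  rw [Function.comp_apply, Function.comp_apply, dist_eq_norm] at h1
  linarith

variable [CompleteSpace E]

lemma exists_eigen (Q : E →L[ℂ] E) (hQ : IsCompactOperator ⇑Q) {p : ℂ}
    (hp : p ∈ spectrum ℂ Q) (hp0 : p ≠ 0)
    (hcl : p ∈ closure ((spectrum ℂ Q)ᶜ)) : ∃ v : E, v ≠ 0 ∧ Q v = p • v := by
  classical
  have key : ∀ ε : ℝ, 0 < ε → ∃ x : E, ‖x‖ = 1 ∧ ‖Q x - p • x‖ ≤ ε := by
    intro ε hε
    obtain ⟨ν, hν, hνp⟩ : ∃ ν, ν ∉ spectrum ℂ Q ∧ ‖p - ν‖ < ε / 3 := by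
      obtain ⟨ν, hν1, hν2⟩ := Metric.mem_closure_iff.1 hcl (ε / 3) (by linarith)
      exact ⟨ν, hν1, by rwa [← dist_eq_norm]⟩
    have hpν : p ≠ ν := fun h => hν (h ▸ hp)
    have hpνpos : 0 < ‖p - ν‖ := by
      rw [norm_pos_iff, sub_ne_zero]; exact hpν
    obtain ⟨u, hu⟩ := spectrum.notMem_iff.1 hν
    set R : E →L[ℂ] E := ((u⁻¹ : (E →L[ℂ] E)ˣ) : E →L[ℂ] E) with hR_def
    -- lower bound on ‖R‖
    have hRnorm : ‖p - ν‖⁻¹ ≤ ‖R‖ := by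
      by_contra hcon
      push_neg at hcon
      have hRpos : 0 < ‖R‖ := by
        rcases (norm_nonneg R).lt_or_eq with h | h
        · exact h
        · exfalso
          have hR0 : R = 0 := by rwa [eq_comm, norm_eq_zero] at h
          have : (1 : E →L[ℂ] E) = 0 := by
            have := u.mul_inv
            rw [← hR_def] at this
            rw [hR0, mul_zero] at this
            exact this.symm
          have hz : ∀ a : E →L[ℂ] E, a = (0 : E →L[ℂ] E) := fun a => by
            calc a = a * 1 := (mul_one a).symm
              _ = a * 0 := by rw [this]
              _ = 0 := mul_zero a
          have hone : algebraMap ℂ (E →L[ℂ] E) p - Q = 1 := (hz _).trans (hz 1).symm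
          exact (spectrum.notMem_iff.2 (hone ▸ isUnit_one)) hp
      -- from hcon : ‖R‖ < ‖p-ν‖⁻¹ deduce ‖p-ν‖ < ‖R‖⁻¹
      have hlt : ‖algebraMap ℂ (E →L[ℂ] E) p - Q - u‖ < ‖R‖⁻¹ := by
        have h1 : algebraMap ℂ (E →L[ℂ] E) p - Q - u
            = algebraMap ℂ (E →L[ℂ] E) (p - ν) := by
          rw [hu]; rw [map_sub]; abel
        rw [h1]
        have h2 : ‖algebraMap ℂ (E →L[ℂ] E) (p - ν)‖ ≤ ‖p - ν‖ := by
          rw [Algebra.algebraMap_eq_smul_one, norm_smul]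
          have := ContinuousLinearMap.norm_id_le (𝕜 := ℂ) (E := E)
          calc ‖p - ν‖ * ‖(1 : E →L[ℂ] E)‖ ≤ ‖p - ν‖ * 1 := by
                apply mul_le_mul_of_nonneg_left _ (norm_nonneg _)
                simpa [ContinuousLinearMap.one_def] using this
            _ = ‖p - ν‖ := mul_one _
        calc ‖algebraMap ℂ (E →L[ℂ] E) (p - ν)‖ ≤ ‖p - ν‖ := h2
          _ < ‖R‖⁻¹ := by
              rw [← inv_inv ‖p - ν‖]
              exact inv_strictAnti₀ hRpos hcon
      have : IsUnit (algebraMap ℂ (E →L[ℂ] E) p - Q) := by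
        have := (u.ofNearby (algebraMap ℂ (E →L[ℂ] E) p - Q) (by rwa [hR_def] at hlt)).isUnit
        simpa using this
      exact (spectrum.notMem_iff.2 this) hp
    have hRpos : 0 < ‖R‖ := lt_of_lt_of_le (by positivity) hRnorm
    obtain ⟨y, hy1, hy2⟩ := R.exists_lt_apply_of_lt_opNorm (by linarith : ‖R‖ / 2 < ‖R‖)
    set v₀ : E := R y with hv₀_def
    have hv₀pos : 0 < ‖v₀‖ := lt_trans (by positivity) hy2
    set cn : ℂ := (‖v₀‖ : ℂ) with hcn_def
    have hcnne : cn ≠ 0 := by simpa [hcn_def] using ne_of_gt hv₀pos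
    refine ⟨cn⁻¹ • v₀, ?_, ?_⟩
    · rw [norm_smul, norm_inv]
      simp only [hcn_def, Complex.norm_real, Real.norm_eq_abs, abs_of_pos hv₀pos]
      field_simp
    · -- estimate
      have huv₀ : (u : E →L[ℂ] E) v₀ = y := by
        have : ((u : E →L[ℂ] E) * R) = 1 := by
          rw [hR_def]; exact u.mul_inv
        calc (u : E →L[ℂ] E) v₀ = ((u : E →L[ℂ] E) * R) y := rfl
          _ = y := by rw [this]; rfl
      have hux : ∀ w : E, (u : E →L[ℂ] E) w = ν • w - Q w := by
        intro w
        rw [hu]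
        simp [Algebra.algebraMap_eq_smul_one]
      have hQv : Q (cn⁻¹ • v₀) - p • (cn⁻¹ • v₀)
          = -((p - ν) • (cn⁻¹ • v₀)) - cn⁻¹ • y := by
        have hQv₀ : Q v₀ = ν • v₀ - y := by
          rw [← huv₀, hux v₀]; abel
        rw [map_smul, hQv₀]; module
      rw [hQv]
      have h1 : ‖(p - ν) • (cn⁻¹ • v₀)‖ ≤ ε / 3 := by
        rw [norm_smul]
        have hxn : ‖cn⁻¹ • v₀‖ = 1 := by
          rw [norm_smul, norm_inv]
          simp only [hcn_def, Complex.norm_real, Real.norm_eq_abs, abs_of_pos hv₀pos]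
          field_simp
        rw [hxn, mul_one]
        linarith
      have h2 : ‖cn⁻¹ • y‖ ≤ 2 * (ε / 3) := by
        rw [norm_smul, norm_inv]
        have hcnn : ‖cn‖ = ‖v₀‖ := by simp [hcn_def, abs_of_pos hv₀pos]
        rw [hcnn]
        have hyle : ‖y‖ ≤ 1 := le_of_lt hy1
        have hv₀ge : ‖R‖ / 2 ≤ ‖v₀‖ := le_of_lt hy2
        have h3 : ‖v₀‖⁻¹ ≤ (‖R‖ / 2)⁻¹ :=
          inv_anti₀ (by positivity) hv₀ge
        have h4 : ‖R‖⁻¹ ≤ ‖p - ν‖ := by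
          rw [← inv_inv ‖p - ν‖]
          exact inv_anti₀ (by positivity) hRnorm
        have h5 : (‖R‖ / 2)⁻¹ = 2 * ‖R‖⁻¹ := by
          rw [inv_div]; ring
        calc ‖v₀‖⁻¹ * ‖y‖ ≤ ‖v₀‖⁻¹ * 1 :=
              mul_le_mul_of_nonneg_left hyle (by positivity)
          _ = ‖v₀‖⁻¹ := mul_one _
          _ ≤ 2 * ‖R‖⁻¹ := by rw [← h5]; exact h3
          _ ≤ 2 * ‖p - ν‖ := by linarith
          _ ≤ 2 * (ε / 3) := by linarith
      calc ‖-((p - ν) • (cn⁻¹ • v₀)) - cn⁻¹ • y‖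
          ≤ ‖-((p - ν) • (cn⁻¹ • v₀))‖ + ‖cn⁻¹ • y‖ := norm_sub_le _ _
        _ = ‖(p - ν) • (cn⁻¹ • v₀)‖ + ‖cn⁻¹ • y‖ := by rw [norm_neg]
        _ ≤ ε / 3 + 2 * (ε / 3) := by linarith
        _ = ε := by ring
  -- extract an eigenvector from the approximate eigenvectors
  have hseq : ∀ n : ℕ, ∃ x : E, ‖x‖ = 1 ∧ ‖Q x - p • x‖ ≤ ((n : ℝ) + 1)⁻¹ :=
    fun n => key _ (by positivity)
  choose x hx1 hx2 using hseq
  have hK : IsCompact (closure (⇑Q '' Metric.closedBall 0 1)) :=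
    hQ.isCompact_closure_image_closedBall 1
  have hmemK : ∀ n, Q (x n) ∈ closure (⇑Q '' Metric.closedBall 0 1) :=
    fun n => subset_closure ⟨x n, by simp [hx1 n], rfl⟩
  obtain ⟨y₀, -, φ, hφ, hconv⟩ := hK.tendsto_subseq hmemK
  have hdiff : Tendsto (fun n => Q (x (φ n)) - p • x (φ n)) atTop (nhds 0) := by
    refine squeeze_zero_norm (f := fun n => Q (x (φ n)) - p • x (φ n)) (a := fun n => ((n : ℝ) + 1)⁻¹) ?_ ?_
    · intro n
      calc ‖Q (x (φ n)) - p • x (φ n)‖ ≤ ((φ n : ℝ) + 1)⁻¹ := hx2 (φ n)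
        _ ≤ ((n : ℝ) + 1)⁻¹ := by
            apply inv_anti₀ (by positivity)
            have h : n ≤ φ n := hφ.le_apply
            have := (Nat.cast_le (α := ℝ)).2 h
            linarith
    · simpa only [one_div] using tendsto_one_div_add_atTop_nhds_zero_nat (𝕜 := ℝ)
  have hpx : Tendsto (fun n => p • x (φ n)) atTop (nhds y₀) := by
    have : (fun n => p • x (φ n))
        = fun n => Q (x (φ n)) - (Q (x (φ n)) - p • x (φ n)) := by
      funext n; abel
    rw [this]
    simpa using hconv.sub hdiff
  have hxconv : Tendsto (fun n => x (φ n)) atTop (nhds (p⁻¹ • y₀)) := by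
    have := hpx.const_smul (p⁻¹)
    simpa [smul_smul, inv_mul_cancel₀ hp0] using this
  set v : E := p⁻¹ • y₀ with hv_def
  have hvnorm : ‖v‖ = 1 := by
    have h1 : Tendsto (fun n => ‖x (φ n)‖) atTop (nhds ‖v‖) := hxconv.norm
    have h2 : Tendsto (fun n => ‖x (φ n)‖) atTop (nhds 1) := by
      simpa [hx1] using tendsto_const_nhds (α := ℝ) (x := 1) (f := atTop (α := ℕ))
    exact tendsto_nhds_unique h1 h2
  refine ⟨v, by intro h; rw [h, norm_zero] at hvnorm; norm_num at hvnorm, ?_⟩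
  have hQv : Tendsto (fun n => Q (x (φ n))) atTop (nhds (Q v)) :=
    (Q.continuous.tendsto v).comp hxconv
  have hy₀ : Q v = y₀ := tendsto_nhds_unique hQv hconv
  rw [hy₀, hv_def, smul_smul, mul_inv_cancel₀ hp0, one_smul]

lemma exit_eig (Q : E →L[ℂ] E) (hQ : IsCompactOperator ⇑Q) {x d : ℂ}
    (hx : x ∈ spectrum ℂ Q) (hx0 : x ≠ 0) (hd : ‖d‖ = 1)
    (hre : 0 ≤ (x * (starRingEnd ℂ) d).re) :
    ∃ t : ℝ, 0 ≤ t ∧ ‖x‖ ≤ ‖x + t * d‖ ∧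
      ∃ v : E, v ≠ 0 ∧ Q v = (x + t * d) • v := by
  classical
  set S : Set ℝ := {t : ℝ | 0 ≤ t ∧ x + (t : ℂ) * d ∈ spectrum ℂ Q} with hS_def
  have h0S : (0 : ℝ) ∈ S := ⟨le_refl 0, by simpa using hx⟩
  have hSne : S.Nonempty := ⟨0, h0S⟩
  have hbdd : BddAbove S := by
    refine ⟨‖Q‖ * ‖(1 : E →L[ℂ] E)‖ + ‖x‖, fun t ht => ?_⟩
    have h1 : x + (t : ℂ) * d ∈ Metric.closedBall (0 : ℂ) (‖Q‖ * ‖(1 : E →L[ℂ] E)‖) :=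
      spectrum.subset_closedBall_norm_mul Q ht.2
    rw [Metric.mem_closedBall, dist_zero_right] at h1
    have h2 : ‖(t : ℂ) * d‖ = t := by
      rw [norm_mul, hd, mul_one, Complex.norm_real, Real.norm_eq_abs, abs_of_nonneg ht.1]
    have h3 : ‖(t : ℂ) * d‖ ≤ ‖x + (t : ℂ) * d‖ + ‖x‖ := by
      have := norm_sub_le (x + (t : ℂ) * d) x
      simpa using this
    linarith
  have hSclosed : IsClosed S := by
    have : S = Set.Ici (0 : ℝ) ∩ (fun t : ℝ => x + (t : ℂ) * d) ⁻¹' (spectrum ℂ Q) := by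
      ext t; simp [hS_def, Set.mem_Ici, And.comm]
    rw [this]
    exact isClosed_Ici.inter ((spectrum.isClosed Q).preimage
      (by continuity))
  set t₀ : ℝ := sSup S with ht₀_def
  have ht₀S : t₀ ∈ S := hSclosed.csSup_mem hSne hbdd
  set pt : ℂ := x + (t₀ : ℂ) * d with hp_def
  have hpspec : pt ∈ spectrum ℂ Q := ht₀S.2
  have ht₀0 : 0 ≤ t₀ := ht₀S.1
  -- norm estimate
  have hnorm : ‖x‖ ≤ ‖pt‖ := by
    have hsq : Complex.normSq x ≤ Complex.normSq pt := by
      have h1 : Complex.normSq pt = Complex.normSq x + Complex.normSq ((t₀ : ℂ) * d)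
          + 2 * (x * (starRingEnd ℂ) ((t₀ : ℂ) * d)).re := by
        rw [hp_def]
        rw [Complex.normSq_add]
      have h2 : (x * (starRingEnd ℂ) ((t₀ : ℂ) * d)).re
          = t₀ * (x * (starRingEnd ℂ) d).re := by
        rw [map_mul, Complex.conj_ofReal]
        have : x * ((t₀ : ℂ) * (starRingEnd ℂ) d) = (t₀ : ℂ) * (x * (starRingEnd ℂ) d) := by
          ring
        rw [this, Complex.re_ofReal_mul]
      rw [h1, h2]
      have h3 : 0 ≤ Complex.normSq ((t₀ : ℂ) * d) := Complex.normSq_nonneg _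
      have h4 : 0 ≤ t₀ * (x * (starRingEnd ℂ) d).re := mul_nonneg ht₀0 hre
      linarith
    have := Real.sqrt_le_sqrt hsq
    rwa [← Complex.norm_def, ← Complex.norm_def] at this
  have hppos : 0 < ‖pt‖ := lt_of_lt_of_le (norm_pos_iff.2 hx0) hnorm
  have hp0 : pt ≠ 0 := norm_pos_iff.1 hppos
  -- pt is in the closure of the complement of the spectrum
  have hcl : pt ∈ closure ((spectrum ℂ Q)ᶜ) := by
    rw [Metric.mem_closure_iff]
    intro ε hε
    set ε' : ℝ := min (ε / 2) 1 with hε'_def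
    have hε'pos : 0 < ε' := lt_min (by linarith) one_pos
    refine ⟨x + ((t₀ + ε' : ℝ) : ℂ) * d, ?_, ?_⟩
    · intro hmem
      have : (t₀ + ε') ∈ S := ⟨by linarith, by convert hmem using 2⟩
      have := le_csSup hbdd this
      simp only [← ht₀_def] at this
      linarith
    · rw [dist_eq_norm]
      have : pt - (x + ((t₀ + ε' : ℝ) : ℂ) * d) = -((ε' : ℝ) : ℂ) * d := by
        rw [hp_def]; push_cast; ring
      rw [this, norm_mul, hd, mul_one, norm_neg, Complex.norm_real, Real.norm_eq_abs,
        abs_of_pos hε'pos]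
      calc ε' ≤ ε / 2 := min_le_left _ _
        _ < ε := by linarith
  obtain ⟨v, hv0, hv⟩ := exists_eigen Q hQ hpspec hp0 hcl
  exact ⟨t₀, ht₀0, hnorm, v, hv0, hv⟩

lemma main_acc (Q : E →L[ℂ] E) (hQ : IsCompactOperator ⇑Q) {w : ℂ} (hw : w ≠ 0)
    (hacc : AccPt w (𝓟 (spectrum ℂ Q))) : False := by
  classical
  set δ : ℝ := ‖w‖ / 2 with hδ_def
  have hδpos : 0 < δ := by
    have : 0 < ‖w‖ := norm_pos_iff.2 hw
    rw [hδ_def]; linarith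
  set B : Set ℂ := spectrum ℂ Q ∩ Metric.closedBall w δ with hB_def
  -- B is infinite
  have hBinf : B.Infinite := by
    intro hBfin
    have hfin : (B \ {w}).Finite := hBfin.diff
    have hop : IsOpen ((B \ {w})ᶜ) := hfin.isClosed.isOpen_compl
    have hU : (Metric.ball w δ ∩ (B \ {w})ᶜ) ∈ nhds w := by
      apply IsOpen.mem_nhds (Metric.isOpen_ball.inter hop)
      refine ⟨Metric.mem_ball_self hδpos, ?_⟩
      simp
    obtain ⟨y, ⟨hy1, hy2⟩, hy3⟩ := accPt_iff_nhds.1 hacc _ hU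
    have hyB : y ∈ B := ⟨hy2, Metric.ball_subset_closedBall hy1.1⟩
    exact hy1.2 ⟨hyB, hy3⟩
  -- points of B are not small
  have hBnorm : ∀ μ ∈ B, δ ≤ ‖μ‖ := by
    intro μ hμ
    have h1 : dist μ w ≤ δ := Metric.mem_closedBall.1 hμ.2
    have h2 : ‖w‖ - ‖μ‖ ≤ dist μ w := by
      rw [dist_eq_norm]
      have := norm_sub_norm_le (w) (μ)
      rw [norm_sub_rev] at this
      linarith [abs_le.1 (abs_norm_sub_norm_le w μ)]
    have : ‖w‖ = 2 * δ := by rw [hδ_def]; ring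
    linarith
  have hBne : ∀ μ ∈ B, μ ≠ 0 := fun μ hμ h => by
    have := hBnorm μ hμ; rw [h, norm_zero] at this; linarith
  have hBspec : ∀ μ ∈ B, μ ∈ spectrum ℂ Q := fun μ hμ => hμ.1
  -- the finite set of large eigenvalues
  set Eig : Set ℂ := {p : ℂ | δ ≤ ‖p‖ ∧ ∃ v : E, v ≠ 0 ∧ Q v = p • v} with hEig_def
  have hEigfin : Eig.Finite := eig_finite Q hQ hδpos
  set g : ℂ → ℂ := fun μ => ((‖μ‖ : ℝ) : ℂ)⁻¹ * μ with hg_def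
  by_cases hcase : (g '' B).Finite
  · -- some fiber of g is infinite
    have : ∃ d₀ ∈ g '' B, (B ∩ g ⁻¹' {d₀}).Infinite := by
      by_contra hcon
      push_neg at hcon
      have : B ⊆ ⋃ y ∈ g '' B, B ∩ g ⁻¹' {y} := fun μ hμ =>
        Set.mem_biUnion (Set.mem_image_of_mem g hμ) ⟨hμ, rfl⟩
      exact hBinf ((hcase.biUnion hcon).subset this)
    obtain ⟨d₀, hd₀mem, hB₀inf⟩ := this
    set B₀ : Set ℂ := B ∩ g ⁻¹' {d₀} with hB₀_def
    -- basic facts about B₀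
    have hB₀eq : ∀ μ ∈ B₀, μ = ((‖μ‖ : ℝ) : ℂ) * d₀ := by
      intro μ hμ
      have hμ0 : μ ≠ 0 := hBne μ hμ.1
      have hg : ((‖μ‖ : ℝ) : ℂ)⁻¹ * μ = d₀ := hμ.2
      have hn0 : ((‖μ‖ : ℝ) : ℂ) ≠ 0 := by
        simpa using norm_ne_zero_iff.2 hμ0
      rw [← hg, ← mul_assoc, mul_inv_cancel₀ hn0, one_mul]
    have hd₀norm : ‖d₀‖ = 1 := by
      obtain ⟨μ, hμ⟩ := hB₀inf.nonempty
      have hμ0 : μ ≠ 0 := hBne μ hμ.1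
      have hμpos : 0 < ‖μ‖ := norm_pos_iff.2 hμ0
      have hn : ‖μ‖ = ‖μ‖ * ‖d₀‖ := by
        conv_lhs => rw [hB₀eq μ hμ]
        rw [norm_mul, Complex.norm_real, Real.norm_eq_abs, abs_of_pos hμpos]
      have h2 : ‖μ‖ * 1 = ‖μ‖ * ‖d₀‖ := by linarith
      have := mul_left_cancel₀ (ne_of_gt hμpos) h2
      linarith
    -- exit in the direction I * d₀
    have hIle : ∀ μ ∈ B₀, ∃ p ∈ Eig, (p * (starRingEnd ℂ) d₀).re = ‖μ‖ := by
      intro μ hμ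
      have hμ0 : μ ≠ 0 := hBne μ hμ.1
      have hμeq := hB₀eq μ hμ
      have hdd : d₀ * (starRingEnd ℂ) d₀ = 1 := by
        rw [Complex.mul_conj]
        norm_cast
        rw [Complex.normSq_eq_norm_sq, hd₀norm]
        norm_num
      have hre : 0 ≤ (μ * (starRingEnd ℂ) (Complex.I * d₀)).re := by
        rw [map_mul, Complex.conj_I]
        have : μ * (-Complex.I * (starRingEnd ℂ) d₀)
            = -Complex.I * ((‖μ‖ : ℝ) : ℂ) * (d₀ * (starRingEnd ℂ) d₀) := by
          conv_lhs => rw [hμeq]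
          ring
        rw [this, hdd, mul_one]
        simp
      have hdnorm : ‖Complex.I * d₀‖ = 1 := by
        rw [norm_mul, Complex.norm_I, one_mul, hd₀norm]
      obtain ⟨t, ht0, hnle, v, hv0, hveq⟩ :=
        exit_eig Q hQ (hBspec μ hμ.1) hμ0 hdnorm hre
      refine ⟨μ + (t : ℂ) * (Complex.I * d₀), ⟨le_trans (hBnorm μ hμ.1) hnle, v, hv0, hveq⟩, ?_⟩
      rw [add_mul]
      have h1 : (μ * (starRingEnd ℂ) d₀) = ((‖μ‖ : ℝ) : ℂ) := by
        conv_lhs => rw [hμeq]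
        rw [mul_assoc, hdd, mul_one]
      have h2 : ((t : ℂ) * (Complex.I * d₀)) * (starRingEnd ℂ) d₀
          = (t : ℂ) * Complex.I := by
        rw [mul_assoc ((t:ℂ)) _ _, mul_assoc Complex.I _ _, hdd, mul_one]
      rw [h1, h2]
      simp
    -- norms of B₀ are infinite, giving infinitely many eigenvalues
    have hninj : Set.InjOn (fun μ : ℂ => ‖μ‖) B₀ := by
      intro a ha b hb hab
      rw [hB₀eq a ha, hB₀eq b hb]
      simp only at hab
      rw [hab]
    have hnormsinf : ((fun μ : ℂ => ‖μ‖) '' B₀).Infinite := hB₀inf.image hninj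
    have hsub : (fun μ : ℂ => ‖μ‖) '' B₀ ⊆ (fun p : ℂ => (p * (starRingEnd ℂ) d₀).re) '' Eig := by
      rintro _ ⟨μ, hμ, rfl⟩
      obtain ⟨p, hp, hpeq⟩ := hIle μ hμ
      exact ⟨p, hp, hpeq⟩
    exact hnormsinf ((hEigfin.image _).subset hsub)
  · -- infinitely many directions: radial exit
    have hgsub : g '' B ⊆ g '' Eig := by
      rintro _ ⟨μ, hμ, rfl⟩
      have hμ0 : μ ≠ 0 := hBne μ hμ
      have hμpos : 0 < ‖μ‖ := norm_pos_iff.2 hμ0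
      have hgnorm : ‖g μ‖ = 1 := by
        rw [hg_def]
        simp only [norm_mul, norm_inv, Complex.norm_real, Real.norm_eq_abs,
          abs_of_pos hμpos]
        field_simp
      have hre : 0 ≤ (μ * (starRingEnd ℂ) (g μ)).re := by
        rw [hg_def]
        simp only [map_mul, map_inv₀]
        have hconjr : (starRingEnd ℂ) ((‖μ‖ : ℝ) : ℂ) = ((‖μ‖ : ℝ) : ℂ) := Complex.conj_ofReal _
        rw [hconjr]
        have : μ * (((‖μ‖ : ℝ) : ℂ)⁻¹ * (starRingEnd ℂ) μ)
            = ((‖μ‖ : ℝ) : ℂ)⁻¹ * (μ * (starRingEnd ℂ) μ) := by ring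
        rw [this, Complex.mul_conj]
        rw [← Complex.ofReal_inv, ← Complex.ofReal_mul]
        rw [Complex.ofReal_re]
        exact mul_nonneg (inv_nonneg.2 (norm_nonneg μ)) (Complex.normSq_nonneg μ)
      obtain ⟨t, ht0, hnle, v, hv0, hveq⟩ := exit_eig Q hQ (hBspec μ hμ) hμ0 hgnorm hre
      set p : ℂ := μ + (t : ℂ) * g μ with hpd
      have hpEig : p ∈ Eig := ⟨le_trans (hBnorm μ hμ) hnle, v, hv0, hveq⟩
      refine ⟨p, hpEig, ?_⟩
      -- g p = g μ
      have hpμ : p = (((1 : ℝ) + t / ‖μ‖ : ℝ) : ℂ) * μ := by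
        rw [hpd, hg_def]
        push_cast
        field_simp
      have hspos : (0 : ℝ) < 1 + t / ‖μ‖ := by
        have := div_nonneg ht0 (norm_nonneg μ)
        linarith
      have hpnorm : ‖p‖ = (1 + t / ‖μ‖) * ‖μ‖ := by
        rw [hpμ, norm_mul, Complex.norm_real, Real.norm_eq_abs, abs_of_pos hspos]
      rw [hg_def]
      simp only
      rw [hpnorm, hpμ]
      have h1 : (((1 + t / ‖μ‖ : ℝ)) : ℂ) ≠ 0 := by
        norm_cast; linarith
      have h2 : ((‖μ‖ : ℝ) : ℂ) ≠ 0 := by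
        simpa using norm_ne_zero_iff.2 hμ0
      rw [Complex.ofReal_mul, mul_inv, mul_comm ((((1 + t / ‖μ‖ : ℝ)) : ℂ))⁻¹ (((‖μ‖:ℝ):ℂ))⁻¹,
        mul_assoc, ← mul_assoc ((((1 + t / ‖μ‖ : ℝ)) : ℂ))⁻¹, inv_mul_cancel₀ h1, one_mul]
    exact hcase ((hEigfin.image g).subset hgsub)

end Aux

open Polynomial Metric in
theorem stmt0 {E : Type*} [NormedAddCommGroup E] [NormedSpace ℂ E] [CompleteSpace E]
    (T P : E →L[ℂ] E) (hP : P ∘L P = P) (c : ℂ)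
    (hcpt : IsCompactOperator (T ∘L T - c ^ 2 • P))
    (z : ℂ) (hz : AccPt z (𝓟 (spectrum ℂ T))) :
    z ∈ ({0, c, -c} : Set ℂ) := by
  classical
  by_contra hznot
  simp only [Set.mem_insert_iff, Set.mem_singleton_iff] at hznot
  push_neg at hznot
  obtain ⟨hz0, hzc, hznc⟩ := hznot
  -- the polynomial q = X^4 - c^2 X^2
  set q : ℂ[X] := X ^ 4 - C (c ^ 2) * X ^ 2 with hq_def
  set Q : E →L[ℂ] E := aeval T q with hQ_def
  have hQeq : Q = T * T * T * T - c ^ 2 • (T * T) := by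
    rw [hQ_def, hq_def]
    rw [map_sub, map_mul, aeval_C, aeval_X_pow, aeval_X_pow, ← Algebra.smul_def]
    rw [show T ^ 4 = T * T * T * T by rw [pow_succ, pow_succ, pow_two],
      show T ^ 2 = T * T from pow_two T]
  -- compactness of Q
  set K : E →L[ℂ] E := T * T - c ^ 2 • P with hK_def
  have hKc : IsCompactOperator ⇑K := hcpt
  have hPx : ∀ x : E, P (P x) = P x := fun x => by
    have := ContinuousLinearMap.ext_iff.1 hP x
    simpa using this
  have hdecomp : Q = T * T * K + c ^ 2 • (K * P) - c ^ 2 • K := by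
    rw [hQeq]
    ext x
    simp only [ContinuousLinearMap.mul_apply, ContinuousLinearMap.sub_apply,
      ContinuousLinearMap.add_apply, ContinuousLinearMap.smul_apply, hK_def,
      map_sub, map_smul]
    rw [hPx x]
    module
  have hQc : IsCompactOperator ⇑Q := by
    have h1 : IsCompactOperator ⇑(T * T * K) := by
      rw [ContinuousLinearMap.mul_def (T * T) K, ContinuousLinearMap.coe_comp']
      exact hKc.clm_comp (T * T)
    have h2 : IsCompactOperator ⇑(c ^ 2 • (K * P)) := by
      rw [ContinuousLinearMap.coe_smul']
      refine IsCompactOperator.smul ?_ (c ^ 2)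
      rw [ContinuousLinearMap.mul_def K P, ContinuousLinearMap.coe_comp']
      exact hKc.comp_clm P
    have h3 : IsCompactOperator ⇑(c ^ 2 • K) := by
      rw [ContinuousLinearMap.coe_smul']
      exact hKc.smul (c ^ 2)
    rw [hdecomp, ContinuousLinearMap.coe_sub', ContinuousLinearMap.coe_add']
    exact (h1.add h2).sub h3
  -- the image point
  set w : ℂ := z ^ 4 - c ^ 2 * z ^ 2 with hw_def
  have hwne : w ≠ 0 := by
    have hfac : w = z ^ 2 * (z - c) * (z + c) := by rw [hw_def]; ring
    rw [hfac]
    exact mul_ne_zero (mul_ne_zero (pow_ne_zero 2 hz0) (sub_ne_zero.2 hzc))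
      (fun h => hznc (by linear_combination h))
  -- spectral mapping
  have hmap : ∀ y : ℂ, y ∈ spectrum ℂ T → y ^ 4 - c ^ 2 * y ^ 2 ∈ spectrum ℂ Q := by
    intro y hy
    have := spectrum.subset_polynomial_aeval T q ⟨y, hy, rfl⟩
    rw [← hQ_def] at this
    simpa [hq_def] using this
  -- root separation
  have hqw : q - C w ≠ 0 := by
    intro h
    have := congrArg (fun p : ℂ[X] => p.coeff 4) h
    simp only [hq_def, coeff_sub, coeff_X_pow, coeff_C_mul, coeff_C, coeff_zero] at this
    norm_num at this
  have hroots : {y : ℂ | y ^ 4 - c ^ 2 * y ^ 2 = w}.Finite := by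
    have h1 := Polynomial.finite_setOf_isRoot hqw
    have h2 : {y : ℂ | y ^ 4 - c ^ 2 * y ^ 2 = w} = {x | IsRoot (q - C w) x} := by
      ext y
      simp only [Set.mem_setOf_eq, IsRoot.def, hq_def, eval_sub, eval_mul, eval_pow, eval_X,
        eval_C]
      constructor
      · intro h; rw [← h]; ring
      · intro h; linear_combination h
    rwa [h2]
  -- transfer of accumulation
  have haccw : AccPt w (𝓟 (spectrum ℂ Q)) := by
    rw [accPt_iff_nhds]
    intro U hU
    have hcont : Continuous (fun y : ℂ => y ^ 4 - c ^ 2 * y ^ 2) :=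
      (continuous_pow 4).sub (continuous_const.mul (continuous_pow 2))
    have hVroot : IsOpen ({y : ℂ | y ^ 4 - c ^ 2 * y ^ 2 = w} \ {z})ᶜ :=
      ((hroots.diff).isClosed).isOpen_compl
    have hV : ((fun y : ℂ => y ^ 4 - c ^ 2 * y ^ 2) ⁻¹' U
        ∩ ({y : ℂ | y ^ 4 - c ^ 2 * y ^ 2 = w} \ {z})ᶜ) ∈ nhds z := by
      apply Filter.inter_mem
      · exact hcont.continuousAt.preimage_mem_nhds (by rwa [hw_def] at hU)
      · apply hVroot.mem_nhds
        simp
    obtain ⟨y, ⟨⟨hyU, hyV⟩, hyspec⟩, hyz⟩ := accPt_iff_nhds.1 hz _ hV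
    refine ⟨y ^ 4 - c ^ 2 * y ^ 2, ⟨hyU, hmap y hyspec⟩, ?_⟩
    intro h
    exact hyV ⟨h, hyz⟩
  exact main_acc Q hQc hwne haccw
end

section
/- Let E be a complex Banach space, let T be a continuous linear operator on E, and let p be a polynomial with complex coefficients such that p(T) is a compact operator. Then every accumulation point z of the spectrum of T satisfies p(z) = 0. -/
open Filter Metric Topology Set

set_option linter.unusedSectionVars false

section Aux

variable {E : Type*} [NormedAddCommGroup E] [NormedSpace ℂ E] [CompleteSpace E]

lemma aux_approx_eig_of_frontier (K : E →L[ℂ] E) {lam : ℂ}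
    (hlam : lam ∈ frontier (spectrum ℂ K)) {ε : ℝ} (hε : 0 < ε) :
    ∃ x : E, ‖x‖ = 1 ∧ ‖K x - lam • x‖ < ε := by
  have hmem : lam ∈ spectrum ℂ K := by
    have := hlam.1
    rwa [(spectrum.isClosed (𝕜 := ℂ) K).closure_eq] at this
  set δ : ℝ := ε / 4 with hδ
  have hδ0 : 0 < δ := by positivity
  -- find μ outside the spectrum close to lam
  obtain ⟨μ, hμmem, hμdist⟩ : ∃ μ ∈ (spectrum ℂ K)ᶜ, dist lam μ < δ := by
    have h2 : lam ∈ closure (spectrum ℂ K)ᶜ := by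
      have := frontier_subset_closure (s := (spectrum ℂ K)ᶜ)
      rw [frontier_compl] at this
      exact this hlam
    rw [Metric.mem_closure_iff] at h2
    obtain ⟨μ, hμ, h⟩ := h2 δ hδ0
    exact ⟨μ, hμ, h⟩
  have hne : μ ≠ lam := fun h => hμmem (h ▸ hmem)
  have hdpos : 0 < ‖μ - lam‖ := by simpa [sub_eq_zero] using hne
  rw [Set.mem_compl_iff, spectrum.notMem_iff] at hμmem
  obtain ⟨u, hu⟩ := hμmem
  set R : E →L[ℂ] E := ↑u⁻¹ with hR
  -- resolvent norm lower bound
  have hRnorm : 1 ≤ ‖μ - lam‖ * ‖R‖ := by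
    by_contra hcon
    push_neg at hcon
    have ht : ‖(μ - lam) • R‖ < 1 :=
      lt_of_le_of_lt ((norm_smul (μ - lam) R).le) hcon
    have hfact : (algebraMap ℂ (E →L[ℂ] E) lam - K) = ↑u * (1 - (μ - lam) • R) := by
      have huR : (↑u : E →L[ℂ] E) * R = 1 := u.mul_inv
      rw [mul_sub, mul_smul_comm, huR, mul_one, hu]
      rw [Algebra.algebraMap_eq_smul_one, Algebra.algebraMap_eq_smul_one]
      module
    have hunit : IsUnit (algebraMap ℂ (E →L[ℂ] E) lam - K) := by
      rw [hfact]
      exact u.isUnit.mul (Units.oneSub _ ht).isUnit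
    exact (spectrum.mem_iff.mp hmem) hunit
  have hRpos : 0 < ‖R‖ := by
    rcases (norm_nonneg R).lt_or_eq with h | h
    · exact h
    · exfalso; rw [← h, mul_zero] at hRnorm; linarith
  -- find a good almost-maximizing vector
  obtain ⟨x0, hx0norm, hx0⟩ := R.exists_lt_apply_of_lt_opNorm (half_lt_self hRpos)
  set y : E := R x0 with hy
  have hypos : 0 < ‖y‖ := lt_trans (by positivity) hx0
  have hyne : y ≠ 0 := norm_pos_iff.mp hypos
  refine ⟨‖y‖⁻¹ • y, ?_, ?_⟩
  · rw [norm_smul, norm_inv, norm_norm, inv_mul_cancel₀ (ne_of_gt hypos)]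
  · have key : μ • y - K y = x0 := by
      have : (↑u : E →L[ℂ] E) y = x0 := by
        rw [hy, hR, ← ContinuousLinearMap.comp_apply, ← ContinuousLinearMap.mul_def, u.mul_inv]
        rfl
      rw [← this, hu]
      simp [Algebra.algebraMap_eq_smul_one, ContinuousLinearMap.sub_apply,
        ContinuousLinearMap.smul_apply]
    have expand : K (‖y‖⁻¹ • y) - lam • (‖y‖⁻¹ • y)
        = ‖y‖⁻¹ • ((μ - lam) • y - x0) := by
      rw [← key, K.map_smul_of_tower]
      module
    rw [expand]
    have hb1 : ‖(μ - lam) • y - x0‖ ≤ ‖μ - lam‖ * ‖y‖ + ‖x0‖ := by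
      refine le_trans (norm_sub_le _ _) ?_
      rw [norm_smul]
    have hx0y : ‖x0‖ ≤ (2 * ‖μ - lam‖) * ‖y‖ := by
      have h1 : ‖x0‖ ≤ 1 := hx0norm.le
      have h2 : ‖R‖ / 2 < ‖y‖ := hx0
      have h3 : 1 ≤ ‖μ - lam‖ * ‖R‖ := hRnorm
      nlinarith [norm_nonneg x0, hdpos]
    rw [norm_smul, norm_inv, norm_norm]
    have : ‖(μ - lam) • y - x0‖ ≤ (3 * ‖μ - lam‖) * ‖y‖ := by nlinarith
    have hfin : ‖y‖⁻¹ * ‖(μ - lam) • y - x0‖ ≤ 3 * ‖μ - lam‖ := by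
      rw [inv_mul_le_iff₀ hypos]
      exact this.trans (le_of_eq (by ring))
    have hμd : ‖μ - lam‖ < δ := by
      rw [dist_comm] at hμdist
      simpa [dist_eq_norm] using hμdist
    calc ‖y‖⁻¹ * ‖(μ - lam) • y - x0‖ ≤ 3 * ‖μ - lam‖ := hfin
      _ < 3 * δ := by linarith
      _ < ε := by rw [hδ]; linarith

lemma aux_eig_of_approx (K : E →L[ℂ] E) (hK : IsCompactOperator K) {w : ℂ} (hw : w ≠ 0)
    (h : ∀ ε : ℝ, 0 < ε → ∃ x : E, ‖x‖ = 1 ∧ ‖K x - w • x‖ < ε) :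
    ∃ x : E, x ≠ 0 ∧ K x = w • x := by
  choose x hx1 hx2 using fun n : ℕ => h (1 / (n + 1)) (by positivity)
  have hC : IsCompact (closure (K '' closedBall (0 : E) 1)) :=
    hK.isCompact_closure_image_closedBall 1
  have hmem : ∀ n, K (x n) ∈ closure (K '' closedBall (0 : E) 1) := fun n =>
    subset_closure ⟨x n, by simp [hx1 n], rfl⟩
  obtain ⟨v, -, φ, hφ, hconv⟩ := hC.tendsto_subseq hmem
  have hdiff : Tendsto (fun n => K (x (φ n)) - w • x (φ n)) atTop (𝓝 0) := by
    rw [tendsto_zero_iff_norm_tendsto_zero]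
    apply squeeze_zero (fun n => norm_nonneg _) (fun n => (hx2 (φ n)).le)
    have h1 : Tendsto (fun n : ℕ => 1 / ((n : ℝ) + 1)) atTop (𝓝 0) :=
      tendsto_one_div_add_atTop_nhds_zero_nat
    exact h1.comp (hφ.tendsto_atTop)
  have hwx : Tendsto (fun n => w • x (φ n)) atTop (𝓝 v) := by
    have : (fun n => w • x (φ n))
        = fun n => K (x (φ n)) - (K (x (φ n)) - w • x (φ n)) := by
      funext n; abel
    rw [this]
    simpa using hconv.sub hdiff
  have hx : Tendsto (fun n => x (φ n)) atTop (𝓝 (w⁻¹ • v)) := by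
    have := hwx.const_smul (w⁻¹)
    simpa [smul_smul, inv_mul_cancel₀ hw] using this
  refine ⟨w⁻¹ • v, ?_, ?_⟩
  · have hnv : Tendsto (fun n => ‖x (φ n)‖) atTop (𝓝 ‖w⁻¹ • v‖) := hx.norm
    have : Tendsto (fun _ : ℕ => (1 : ℝ)) atTop (𝓝 ‖w⁻¹ • v‖) := by
      simpa [hx1] using hnv
    have h1 : ‖w⁻¹ • v‖ = 1 := (tendsto_const_nhds_iff.mp this).symm
    intro h0
    rw [h0] at h1
    simp at h1
  · have hK1 : Tendsto (fun n => K (x (φ n))) atTop (𝓝 (K (w⁻¹ • v))) :=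
      (K.continuous.tendsto _).comp hx
    have h2 : K (w⁻¹ • v) = v := tendsto_nhds_unique hK1 hconv
    rw [h2, smul_smul, mul_inv_cancel₀ hw, one_smul]

lemma aux_eig_finite (K : E →L[ℂ] E) (hK : IsCompactOperator K) {r : ℝ} (hr : 0 < r) :
    {μ : ℂ | r ≤ ‖μ‖ ∧ ∃ x : E, x ≠ 0 ∧ K x = μ • x}.Finite := by
  by_contra hfin
  have hinf : {μ : ℂ | r ≤ ‖μ‖ ∧ ∃ x : E, x ≠ 0 ∧ K x = μ • x}.Infinite := hfin
  set l : ℕ → ℂ := fun n => ((Set.Infinite.natEmbedding _ hinf) n : ℂ) with hl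
  have linj : Function.Injective l :=
    Subtype.coe_injective.comp (Set.Infinite.natEmbedding _ hinf).injective
  have lprop : ∀ n, r ≤ ‖l n‖ ∧ ∃ x : E, x ≠ 0 ∧ K x = l n • x :=
    fun n => ((Set.Infinite.natEmbedding _ hinf) n).2
  have hlr : ∀ n, r ≤ ‖l n‖ := fun n => (lprop n).1
  have hlne : ∀ n, l n ≠ 0 := fun n h => by
    have := hlr n; rw [h] at this; simp at this; linarith
  choose e he0 heK using fun n => (lprop n).2
  have hli : LinearIndependent ℂ e :=
    Module.End.eigenvectors_linearIndependent' (K : E →ₗ[ℂ] E) l linj e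
      (fun n => ⟨Module.End.mem_eigenspace_iff.mpr (heK n), he0 n⟩)
  set F : ℕ → Submodule ℂ E := fun n => Submodule.span ℂ (e '' Set.Iic n) with hF
  have hFmono : ∀ {m n : ℕ}, m ≤ n → F m ≤ F n := fun h =>
    Submodule.span_mono (Set.image_mono (Set.Iic_subset_Iic.mpr h))
  have hFclosed : ∀ n, IsClosed (F n : Set E) := fun n => by
    haveI : FiniteDimensional ℂ (F n) :=
      FiniteDimensional.span_of_finite ℂ ((Set.finite_Iic n).image e)
    exact Submodule.closed_of_finiteDimensional (F n)
  have hemem : ∀ {i n : ℕ}, i ≤ n → e i ∈ F n := fun h =>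
    Submodule.subset_span ⟨_, h, rfl⟩
  have hnotmem : ∀ n, e (n + 1) ∉ F n := fun n => by
    have := LinearIndependent.notMem_span_image hli (s := Set.Iic n) (x := n + 1) (by simp)
    exact this
  -- choose almost-orthogonal unit vectors
  have hy : ∀ n : ℕ, ∃ y : E, ‖y‖ = 1 ∧ y ∈ F (n + 1) ∧
      ∀ u ∈ F n, (1 : ℝ) / 2 ≤ ‖y - u‖ := by
    intro n
    set d : ℝ := infDist (e (n + 1)) (F n) with hd
    have hFne : (F n : Set E).Nonempty := ⟨0, Submodule.zero_mem _⟩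
    have hd0 : 0 < d := ((hFclosed n).notMem_iff_infDist_pos hFne).mp (hnotmem n)
    obtain ⟨z, hz, hdz⟩ := (infDist_lt_iff hFne).mp (show d < 2 * d by linarith)
    set v : E := e (n + 1) - z with hv
    have hvne : v ≠ 0 := fun h => hnotmem n (by
      have : e (n + 1) = z := by rwa [hv, sub_eq_zero] at h
      rw [this]; exact hz)
    have hvpos : 0 < ‖v‖ := norm_pos_iff.mpr hvne
    have hvlt : ‖v‖ < 2 * d := by rwa [hv, ← dist_eq_norm]
    refine ⟨‖v‖⁻¹ • v, ?_, ?_, ?_⟩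
    · rw [norm_smul, norm_inv, norm_norm, inv_mul_cancel₀ (ne_of_gt hvpos)]
    · exact Submodule.smul_of_tower_mem _ _
        (Submodule.sub_mem _ (hemem le_rfl) (hFmono (Nat.le_succ n) hz))
    · intro u hu
      have hmem2 : z + ‖v‖ • u ∈ F n :=
        Submodule.add_mem _ hz (Submodule.smul_of_tower_mem _ _ hu)
      have hlow : d ≤ ‖v - ‖v‖ • u‖ := by
        have : v - ‖v‖ • u = e (n + 1) - (z + ‖v‖ • u) := by rw [hv]; abel
        rw [this, ← dist_eq_norm]
        exact infDist_le_dist_of_mem hmem2 |>.trans_eq' rfl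
      have hvne' : ‖v‖ ≠ 0 := ne_of_gt hvpos
      have heq : ‖v‖⁻¹ • v - u = ‖v‖⁻¹ • (v - ‖v‖ • u) := by
        match_scalars <;> field_simp [hvne']
      rw [heq, norm_smul, norm_inv, norm_norm]
      have hX : 0 ≤ ‖v - ‖v‖ • u‖ := norm_nonneg _
      rw [div_le_iff₀ (by norm_num : (0:ℝ) < 2)]
      have h2 : ‖v‖ ≤ ‖v - ‖v‖ • u‖ * 2 := by nlinarith
      calc (1 : ℝ) = ‖v‖⁻¹ * ‖v‖ := (inv_mul_cancel₀ hvne').symm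
        _ ≤ ‖v‖⁻¹ * (‖v - ‖v‖ • u‖ * 2) :=
            mul_le_mul_of_nonneg_left h2 (by positivity)
        _ = ‖v‖⁻¹ * ‖v - ‖v‖ • u‖ * 2 := by ring
  choose y hy1 hy2 hy3 using hy
  -- invariance properties
  have hKF : ∀ n, ∀ x ∈ F n, K x ∈ F n := by
    intro n
    have : F n ≤ (F n).comap (K : E →ₗ[ℂ] E) := by
      rw [hF, Submodule.span_le]
      rintro - ⟨i, hi, rfl⟩
      simp only [SetLike.mem_coe, Submodule.mem_comap, ContinuousLinearMap.coe_coe]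
      rw [heK i]
      exact Submodule.smul_mem _ _ (hemem hi)
    intro x hx
    exact this hx
  have hLF : ∀ n, ∀ x ∈ F (n + 1), l (n + 1) • x - K x ∈ F n := by
    intro n
    set L : E →ₗ[ℂ] E := l (n + 1) • LinearMap.id - (K : E →ₗ[ℂ] E) with hL
    have : F (n + 1) ≤ (F n).comap L := by
      rw [hF, Submodule.span_le]
      rintro - ⟨i, hi, rfl⟩
      simp only [SetLike.mem_coe, Submodule.mem_comap, hL, LinearMap.sub_apply,
        LinearMap.smul_apply, LinearMap.id_apply, ContinuousLinearMap.coe_coe]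
      rw [heK i, ← sub_smul]
      rcases Nat.lt_or_ge i (n + 1) with h | h
      · exact Submodule.smul_mem _ _ (hemem (Nat.lt_succ_iff.mp h))
      · have hieq : i = n + 1 := le_antisymm hi h
        subst hieq
        simp
    intro x hx
    have := this hx
    simpa [hL] using this
  -- separation of the images
  have hsep : ∀ m n : ℕ, m < n → r / 2 ≤ ‖K (y n) - K (y m)‖ := by
    intro m n hmn
    set a : E := l (n + 1) • y n - K (y n) with ha
    have haF : a ∈ F n := hLF n (y n) (hy2 n)
    have hKym : K (y m) ∈ F n := by
      have h1 : K (y m) ∈ F (m + 1) := hKF (m + 1) (y m) (hy2 m)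
      exact hFmono (Nat.succ_le_of_lt hmn) h1
    set w : E := (l (n + 1))⁻¹ • (a + K (y m)) with hw
    have hwF : w ∈ F n := Submodule.smul_mem _ _ (Submodule.add_mem _ haF hKym)
    have hkey : K (y n) - K (y m) = l (n + 1) • (y n - w) := by
      rw [hw, ha, smul_sub, smul_smul, mul_inv_cancel₀ (hlne (n + 1)), one_smul]
      abel
    rw [hkey, norm_smul]
    have h12 : (1 : ℝ) / 2 ≤ ‖y n - w‖ := hy3 n w hwF
    calc r / 2 = r * (1 / 2) := by ring
      _ ≤ ‖l (n + 1)‖ * ‖y n - w‖ :=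
          mul_le_mul (hlr (n + 1)) h12 (by norm_num) (norm_nonneg _)
  -- compactness contradiction
  have hC : IsCompact (closure (K '' closedBall (0 : E) 1)) :=
    hK.isCompact_closure_image_closedBall 1
  have hmem : ∀ n, K (y n) ∈ closure (K '' closedBall (0 : E) 1) := fun n =>
    subset_closure ⟨y n, by simp [hy1 n], rfl⟩
  obtain ⟨v, -, φ, hφ, hconv⟩ := hC.tendsto_subseq hmem
  rw [Metric.tendsto_atTop] at hconv
  obtain ⟨N, hN⟩ := hconv (r / 4) (by linarith)
  have h1 := hN N le_rfl
  have h2 := hN (N + 1) (Nat.le_succ N)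
  have hlt : φ N < φ (N + 1) := hφ (Nat.lt_succ_self N)
  have := hsep (φ N) (φ (N + 1)) hlt
  have hd : dist (K (y (φ (N + 1)))) (K (y (φ N))) < r / 2 := by
    calc dist (K (y (φ (N + 1)))) (K (y (φ N)))
        ≤ dist (K (y (φ (N + 1)))) v + dist v (K (y (φ N))) := dist_triangle _ _ _
      _ < r / 4 + r / 4 := by
          rw [dist_comm v]
          exact add_lt_add (h2) (h1)
      _ = r / 2 := by ring
  rw [dist_eq_norm] at hd
  linarith

lemma aux_accPt_infinite {z : ℂ} {S : Set ℂ} (h : AccPt z (𝓟 S)) {U : Set ℂ}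
    (hU : U ∈ 𝓝 z) : (U ∩ S).Infinite := by
  intro hfin
  have hzmem : z ∉ ((U ∩ S) \ {z} : Set ℂ) := by simp
  have hcl : IsClosed ((U ∩ S) \ {z} : Set ℂ) := hfin.diff.isClosed
  have hV : U ∩ ((U ∩ S) \ {z})ᶜ ∈ 𝓝 z :=
    inter_mem hU (hcl.isOpen_compl.mem_nhds hzmem)
  obtain ⟨y, ⟨⟨hyU, hyC⟩, hyS⟩, hyne⟩ := accPt_iff_nhds.mp h _ hV
  exact hyC ⟨⟨hyU, hyS⟩, hyne⟩

lemma aux_no_accpt (K : E →L[ℂ] E) (hK : IsCompactOperator K) {w : ℂ} (hw : w ≠ 0) :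
    ¬ AccPt w (𝓟 (spectrum ℂ K)) := by
  intro hacc
  set S : Set ℂ := spectrum ℂ K with hS
  have hSclosed : IsClosed S := spectrum.isClosed K
  have hScpt : IsCompact S := spectrum.isCompact K
  set Eig : Set ℂ := {μ : ℂ | ∃ x : E, x ≠ 0 ∧ K x = μ • x} with hEig
  -- frontier points are eigenvalues or zero
  have hfr : frontier S ⊆ {0} ∪ Eig := by
    intro lam hlam
    rcases eq_or_ne lam 0 with h0 | h0
    · exact Or.inl (by simp [h0])
    · refine Or.inr (aux_eig_of_approx K hK h0 (fun ε hε => ?_))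
      exact aux_approx_eig_of_frontier K hlam hε
  -- eigenvalues are countable
  have hEigCt : Eig.Countable := by
    have hsub : Eig ⊆ {0} ∪ ⋃ n : ℕ,
        {μ : ℂ | 1 / ((n : ℝ) + 1) ≤ ‖μ‖ ∧ ∃ x : E, x ≠ 0 ∧ K x = μ • x} := by
      intro μ hμ
      rcases eq_or_ne μ 0 with h0 | h0
      · exact Or.inl (by simp [h0])
      · have hpos : 0 < ‖μ‖ := norm_pos_iff.mpr h0
        obtain ⟨n, hn⟩ := exists_nat_one_div_lt hpos
        exact Or.inr (mem_iUnion.mpr ⟨n, hn.le, hμ⟩)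
    refine Set.Countable.mono hsub ?_
    refine (Set.countable_singleton 0).union (Set.countable_iUnion fun n => ?_)
    exact (aux_eig_finite K hK (by positivity)).countable
  have hfrCt : (frontier S).Countable :=
    ((Set.countable_singleton 0).union hEigCt).mono hfr
  -- the interior of the spectrum is empty
  have hint : interior S = ∅ := by
    by_contra hne
    obtain ⟨s, hs⟩ := Set.nonempty_iff_ne_empty.mpr hne
    obtain ⟨R, hR⟩ := hScpt.isBounded.subset_closedBall 0
    have hR0 : 0 ≤ R := le_trans (norm_nonneg s) (by
      have := hR (interior_subset hs); simpa [dist_eq_norm] using this)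
    -- ray exit points
    have key : ∀ t : ℝ, ∃ u : ℝ, 0 < u ∧ s + u • ((1 : ℂ) + t * Complex.I) ∈ frontier S := by
      intro t
      set d : ℂ := (1 : ℂ) + t * Complex.I with hd
      have hdre : d.re = 1 := by simp [hd]
      have hdnorm : 1 ≤ ‖d‖ := by
        calc (1 : ℝ) = |d.re| := by rw [hdre]; norm_num
          _ ≤ ‖d‖ := Complex.abs_re_le_norm d
      have hcont : Continuous (fun u : ℝ => s + u • d) :=
        continuous_const.add (continuous_id.smul continuous_const)
      set A : Set ℝ := {u : ℝ | 0 ≤ u ∧ s + u • d ∉ interior S} with hA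
      have hAclosed : IsClosed A := by
        have : A = Ici (0 : ℝ) ∩ (fun u : ℝ => s + u • d) ⁻¹' (interior S)ᶜ := rfl
        rw [this]
        exact isClosed_Ici.inter (isOpen_interior.isClosed_compl.preimage hcont)
      have hAne : A.Nonempty := by
        have hc0 : (0:ℝ) < R + ‖s‖ + 1 := by linarith [norm_nonneg s]
        refine ⟨R + ‖s‖ + 1, hc0.le, fun hmem => ?_⟩
        have h1 : s + (R + ‖s‖ + 1) • d ∈ S := interior_subset hmem
        have h2 : ‖s + (R + ‖s‖ + 1) • d‖ ≤ R := by
          have := hR h1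
          simpa [dist_eq_norm] using this
        have h3 : ‖(R + ‖s‖ + 1) • d‖ ≤ ‖s + (R + ‖s‖ + 1) • d‖ + ‖s‖ := by
          have h4 := norm_sub_le (s + (R + ‖s‖ + 1) • d) s
          simpa [add_sub_cancel_left] using h4
        have h5 : R + ‖s‖ + 1 ≤ ‖(R + ‖s‖ + 1) • d‖ := by
          rw [norm_smul, Real.norm_eq_abs, abs_of_pos hc0]
          nlinarith [norm_nonneg s]
        linarith
      have hAbdd : BddBelow A := ⟨0, fun u hu => hu.1⟩
      set u₀ : ℝ := sInf A with hu₀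
      have hu₀mem : u₀ ∈ A := hAclosed.csInf_mem hAne hAbdd
      -- u₀ is positive
      have hu₀pos : 0 < u₀ := by
        have hcont0 : ContinuousAt (fun u : ℝ => s + u • d) 0 := hcont.continuousAt
        have hnhds : (fun u : ℝ => s + u • d) ⁻¹' interior S ∈ 𝓝 (0 : ℝ) := by
          apply hcont0.preimage_mem_nhds
          rw [show s + (0 : ℝ) • d = s by simp]
          exact isOpen_interior.mem_nhds hs
        obtain ⟨ε, hε, hball⟩ := Metric.mem_nhds_iff.mp hnhds
        have hle : ε ≤ u₀ := by
          apply le_csInf hAne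
          intro v hv
          by_contra hlt
          push_neg at hlt
          have : v ∈ ball (0 : ℝ) ε := by
            rw [mem_ball, dist_zero_right, Real.norm_eq_abs, abs_of_nonneg hv.1]
            exact hlt
          exact hv.2 (hball this)
        linarith
      refine ⟨u₀, hu₀pos, ?_⟩
      -- closure membership
      have h1 : Tendsto (fun k : ℕ => u₀ * ((k : ℝ) / ((k : ℝ) + 1))) atTop (𝓝 u₀) := by
        have h0 := tendsto_natCast_div_add_atTop (1 : ℝ)
        have := h0.const_mul u₀
        simpa using this
      have hseq : Tendsto (fun k : ℕ => s + (u₀ * ((k : ℝ) / ((k : ℝ) + 1))) • d) atTop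
          (𝓝 (s + u₀ • d)) := (hcont.tendsto u₀).comp h1
      have hmem_cl : s + u₀ • d ∈ closure (interior S) := by
        apply mem_closure_of_tendsto hseq
        apply Eventually.of_forall
        intro k
        set uk : ℝ := u₀ * ((k : ℝ) / ((k : ℝ) + 1)) with huk
        have hk0 : 0 ≤ uk := by positivity
        have hklt : uk < u₀ := by
          have hfrac : (k : ℝ) / ((k : ℝ) + 1) < 1 := by
            rw [div_lt_one (by positivity)]
            linarith
          calc uk < u₀ * 1 := by
                rw [huk]
                exact mul_lt_mul_of_pos_left hfrac hu₀pos
            _ = u₀ := mul_one u₀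
        have hnotA : uk ∉ A := notMem_of_lt_csInf hklt hAbdd
        by_contra hnotint
        exact hnotA ⟨hk0, hnotint⟩
      rw [hSclosed.frontier_eq]
      exact ⟨closure_minimal interior_subset hSclosed hmem_cl, hu₀mem.2⟩
    choose uu huupos huufr using key
    set f : ℝ → ℂ := fun t => s + uu t • ((1 : ℂ) + t * Complex.I) with hf
    have hinj : Function.Injective f := by
      intro t₁ t₂ h
      have h2 : uu t₁ • ((1 : ℂ) + ↑t₁ * Complex.I) = uu t₂ • ((1 : ℂ) + ↑t₂ * Complex.I) :=
        add_left_cancel h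
      rw [Complex.real_smul, Complex.real_smul] at h2
      have hre := congrArg Complex.re h2
      have him := congrArg Complex.im h2
      simp only [Complex.mul_re, Complex.mul_im, Complex.add_re, Complex.add_im,
        Complex.one_re, Complex.one_im, Complex.mul_I_re, Complex.mul_I_im,
        Complex.ofReal_re, Complex.ofReal_im, Complex.I_re, Complex.I_im, mul_zero, zero_mul,
        sub_zero, add_zero, zero_add, mul_one, neg_zero] at hre him
      have hu1 : uu t₁ ≠ 0 := ne_of_gt (huupos t₁)
      have hueq : uu t₁ = uu t₂ := hre
      rw [hueq] at him
      exact mul_left_cancel₀ (hueq ▸ hu1) him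
    have : (Set.univ : Set ℝ).Countable := by
      refine Set.Countable.mono ?_ (hfrCt.preimage hinj)
      intro t _
      exact huufr t
    exact Cardinal.not_countable_real this
  -- hence the spectrum consists of eigenvalues and 0
  have hSsub : S ⊆ {0} ∪ Eig := by
    have : frontier S = S := by rw [hSclosed.frontier_eq, hint, diff_empty]
    rw [← this]
    exact hfr
  -- contradiction with finiteness of large eigenvalues
  have hwpos : 0 < ‖w‖ := norm_pos_iff.mpr hw
  have hinf : (ball w (‖w‖ / 2) ∩ S).Infinite :=
    aux_accPt_infinite hacc (ball_mem_nhds w (by positivity))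
  apply hinf
  apply Set.Finite.subset (aux_eig_finite K hK (show (0:ℝ) < ‖w‖ / 2 by positivity))
  rintro μ ⟨hμball, hμS⟩
  have hμnorm : ‖w‖ / 2 ≤ ‖μ‖ := by
    rw [mem_ball, dist_eq_norm] at hμball
    have h3 := norm_sub_norm_le w μ
    rw [norm_sub_rev μ w] at hμball
    linarith
  have hμ0 : μ ≠ 0 := by
    intro h0
    rw [h0, norm_zero] at hμnorm
    linarith
  rcases hSsub hμS with h | h
  · exact absurd h hμ0
  · exact ⟨hμnorm, h⟩

end Aux

theorem stmt3 {E : Type*} [NormedAddCommGroup E] [NormedSpace ℂ E] [CompleteSpace E]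
    (T : E →L[ℂ] E) (p : Polynomial ℂ)
    (hcpt : IsCompactOperator (Polynomial.aeval T p : E →L[ℂ] E))
    (z : ℂ) (hz : AccPt z (𝓟 (spectrum ℂ T))) :
    p.eval z = 0 := by
  by_contra hpz
  rcases subsingleton_or_nontrivial E with hsub | hnt
  · haveI : Subsingleton (E →L[ℂ] E) :=
      ⟨fun f g => ContinuousLinearMap.ext fun x => Subsingleton.elim _ _⟩
    have hempty : spectrum ℂ T = ∅ := by
      ext μ
      simp only [Set.mem_empty_iff_false, iff_false]
      intro hμ
      exact (spectrum.mem_iff.mp hμ) (isUnit_of_subsingleton _)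
    rw [hempty] at hz
    exact (show (⊥ : Filter ℂ).NeBot by simpa [AccPt, principal_empty] using hz).ne rfl
  · obtain ⟨x₀, hx₀⟩ := exists_ne (0 : E)
    haveI : Nontrivial (E →L[ℂ] E) :=
      ⟨1, 0, fun h => hx₀ (by simpa using ContinuousLinearMap.ext_iff.mp h x₀)⟩
    by_cases hdeg : 0 < p.degree
    · -- nonconstant case
      set K : E →L[ℂ] E := (Polynomial.aeval T p : E →L[ℂ] E) with hKdef
      have hsubset : (fun k => Polynomial.eval k p) '' spectrum ℂ T ⊆ spectrum ℂ K :=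
        spectrum.subset_polynomial_aeval T p
      refine aux_no_accpt K hcpt hpz ?_
      rw [accPt_iff_nhds]
      intro U hU
      -- points where p takes the value p.eval z, other than z, are finitely many
      have hqne : p - Polynomial.C (p.eval z) ≠ 0 := by
        intro h
        have : p = Polynomial.C (p.eval z) := by
          have := congrArg (· + Polynomial.C (p.eval z)) h
          simpa [sub_add_cancel] using this
        rw [this] at hdeg
        exact absurd hdeg (not_lt.mpr Polynomial.degree_C_le)
      have hroots : {y : ℂ | (p - Polynomial.C (p.eval z)).IsRoot y}.Finite :=
        Polynomial.finite_setOf_isRoot hqne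
      set B : Set ℂ := {y : ℂ | Polynomial.eval y p = Polynomial.eval z p} \ {z} with hB
      have hBfin : B.Finite := by
        refine Set.Finite.subset hroots ?_
        rintro y ⟨hy, -⟩
        rw [Set.mem_setOf_eq] at hy
        simp only [Set.mem_setOf_eq, Polynomial.IsRoot, Polynomial.eval_sub,
          Polynomial.eval_C]
        rw [hy, sub_self]
      have hBclosed : IsClosed B := hBfin.isClosed
      have hzB : z ∉ B := by simp [hB]
      have hVp : (fun y : ℂ => Polynomial.eval y p) ⁻¹' U ∈ 𝓝 z :=
        (Polynomial.continuous p).continuousAt.preimage_mem_nhds hU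
      have hV : ((fun y : ℂ => Polynomial.eval y p) ⁻¹' U) ∩ Bᶜ ∈ 𝓝 z :=
        inter_mem hVp (hBclosed.isOpen_compl.mem_nhds hzB)
      obtain ⟨y, ⟨⟨hyU, hyB⟩, hyS⟩, hyne⟩ := accPt_iff_nhds.mp hz _ hV
      refine ⟨Polynomial.eval y p, ⟨hyU, hsubset ⟨y, hyS, rfl⟩⟩, ?_⟩
      intro heq
      exact hyB ⟨heq, hyne⟩
    · -- constant case
      have hdeg' : p.degree ≤ 0 := not_lt.mp hdeg
      have hpC : p = Polynomial.C (p.coeff 0) := Polynomial.eq_C_of_degree_le_zero hdeg'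
      have hc : p.coeff 0 = p.eval z := by conv_rhs => rw [hpC]; rw [Polynomial.eval_C]
      have haev : (Polynomial.aeval T p : E →L[ℂ] E) = algebraMap ℂ _ (p.coeff 0) := by
        conv_lhs => rw [hpC]
        rw [Polynomial.aeval_C]
      have hcne : p.coeff 0 ≠ 0 := by rw [hc]; exact hpz
      -- the identity is a compact operator
      have hone : IsCompactOperator ((1 : E →L[ℂ] E) : E → E) := by
        have h1 := hcpt
        rw [haev] at h1
        have h2 := h1.smul (p.coeff 0)⁻¹
        have : (p.coeff 0)⁻¹ • (algebraMap ℂ (E →L[ℂ] E) (p.coeff 0) : E → E)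
            = ((1 : E →L[ℂ] E) : E → E) := by
          funext v
          simp [Algebra.algebraMap_eq_smul_one, smul_smul, inv_mul_cancel₀ hcne]
        rwa [this] at h2
      haveI : FiniteDimensional ℂ E := by
        have hcomp : IsCompact (closure ((1 : E →L[ℂ] E) '' closedBall (0 : E) 1)) :=
          hone.isCompact_closure_image_closedBall 1
        have himg : ((1 : E →L[ℂ] E) : E → E) '' closedBall (0 : E) 1 = closedBall 0 1 := by
          simp [Set.image_id']
        rw [himg] at hcomp
        exact FiniteDimensional.of_isCompact_closedBall₀ ℂ one_pos
          (by rwa [closure_eq_iff_isClosed.mpr Metric.isClosed_closedBall] at hcomp)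
      -- spectrum is finite in finite dimension
      have hint : IsIntegral ℂ T := IsIntegral.of_finite ℂ T
      set q : Polynomial ℂ := minpoly ℂ T with hq
      have hqne : q ≠ 0 := minpoly.ne_zero hint
      have haevq : (Polynomial.aeval T q : E →L[ℂ] E) = 0 := minpoly.aeval ℂ T
      have hsub2 : spectrum ℂ T ⊆ {y : ℂ | q.IsRoot y} := by
        intro lam hlam
        have := spectrum.subset_polynomial_aeval T q ⟨lam, hlam, rfl⟩
        rw [haevq, spectrum.zero_eq] at this
        simpa [Polynomial.IsRoot] using this
      have hfin : (spectrum ℂ T).Finite :=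
        (Polynomial.finite_setOf_isRoot hqne).subset hsub2
      have hinf := aux_accPt_infinite hz (univ_mem : (univ : Set ℂ) ∈ 𝓝 z)
      rw [Set.univ_inter] at hinf
      exact hinf hfin
end

section
/- Let E be a complex Banach space, let T and P be continuous linear operators on E with P ∘ P = P, let c ∈ ℂ, and let q be any polynomial with complex coefficients. If T ∘ T − c² • P is a compact operator, then every accumulation point of the spectrum of q(T) belongs to the set {q(0), q(c), q(−c)}. -/
open Filter Metric Polynomial

set_option linter.unusedSectionVars false

private lemma normRI (r : ℝ) : ‖(r:ℂ) * Complex.I‖ = |r| := by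
  rw [norm_mul, Complex.norm_I, mul_one, Complex.norm_real, Real.norm_eq_abs]

private lemma normR (r : ℝ) : ‖(r:ℂ)‖ = |r| := by
  rw [Complex.norm_real, Real.norm_eq_abs]

lemma countable_frontier_interior {S : Set ℂ} (hS : IsCompact S)
    (hc : (frontier S).Countable) : interior S = ∅ := by
  by_contra hne
  obtain ⟨x, hx⟩ := Set.nonempty_iff_ne_empty.mpr hne
  obtain ⟨δ, hδ, hball⟩ := Metric.isOpen_iff.mp isOpen_interior x hx
  have hballS : Metric.ball x δ ⊆ S := hball.trans interior_subset
  obtain ⟨B₀, hB₀⟩ := hS.isBounded.subset_closedBall 0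
  set B := max B₀ 0 with hBdef
  have hB : S ⊆ Metric.closedBall 0 B :=
    hB₀.trans (Metric.closedBall_subset_closedBall (le_max_left _ _))
  have hBnn : 0 ≤ B := le_max_right _ _
  set T : ℝ → Set ℝ := fun a => {t : ℝ | 0 ≤ t ∧ (x + a + t*Complex.I) ∉ S} with hT
  have hTne : ∀ a : ℝ, (T a).Nonempty := by
    intro a
    set t₀ : ℝ := B + ‖x‖ + |a| + 1 with ht₀
    have ht₀nn : 0 ≤ t₀ := by positivity
    refine ⟨t₀, ⟨ht₀nn, ?_⟩⟩
    intro hmem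
    have h1 := hB hmem
    rw [Metric.mem_closedBall, dist_zero_right] at h1
    have h2 : ‖(t₀:ℂ)*Complex.I‖ ≤ ‖x + (a:ℂ) + (t₀:ℂ)*Complex.I‖ + ‖x + (a:ℂ)‖ := by
      have h := norm_sub_le (x + (a:ℂ) + (t₀:ℂ)*Complex.I) (x + (a:ℂ))
      simp only [add_sub_cancel_left] at h
      linarith
    rw [normRI, abs_of_nonneg ht₀nn] at h2
    have h4 : ‖x + (a:ℂ)‖ ≤ ‖x‖ + |a| := by
      calc ‖x + (a:ℂ)‖ ≤ ‖x‖ + ‖(a:ℂ)‖ := norm_add_le _ _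
      _ = ‖x‖ + |a| := by rw [normR]
    rw [ht₀] at h2
    nlinarith
  have hTbdd : ∀ a : ℝ, BddBelow (T a) := fun a => ⟨0, fun t ht => ht.1⟩
  set g : ℝ → ℝ := fun a => sInf (T a) with hg
  set F : ℝ → ℂ := fun a => x + a + (g a)*Complex.I with hF
  have hFinj : Function.Injective F := by
    intro a b hab
    have h : (F a).re = (F b).re := by rw [hab]
    simpa [hF, Complex.add_re, Complex.mul_re, Complex.I_re, Complex.I_im] using h
  have hdistF : ∀ (a t : ℝ), dist (F a) (x + (a:ℂ) + t*Complex.I) = |g a - t| := by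
    intro a t
    rw [dist_eq_norm]
    have h : F a - (x + (a:ℂ) + t*Complex.I) = ((g a - t : ℝ):ℂ)*Complex.I := by
      simp only [hF]; push_cast; ring
    rw [h, normRI]
  have hglb : ∀ a : ℝ, |a| < δ/2 → δ/2 ≤ g a := by
    intro a ha
    apply le_csInf (hTne a)
    intro t ht
    by_contra hlt
    push_neg at hlt
    apply ht.2
    apply hballS
    rw [Metric.mem_ball]
    have hd : dist (x + (a:ℂ) + t*Complex.I) x = ‖(a:ℂ) + t*Complex.I‖ := by
      rw [dist_eq_norm]; ring_nf
    rw [hd]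
    calc ‖(a:ℂ) + t*Complex.I‖ ≤ ‖(a:ℂ)‖ + ‖(t:ℂ)*Complex.I‖ := norm_add_le _ _
    _ = |a| + |t| := by rw [normRI, normR]
    _ < δ/2 + δ/2 := add_lt_add ha (by rw [abs_of_nonneg ht.1]; exact hlt)
    _ = δ := by ring
  have hfront : ∀ a : ℝ, |a| < δ/2 → F a ∈ frontier S := by
    intro a ha
    have hgpos : 0 < g a := lt_of_lt_of_le (by linarith) (hglb a ha)
    rw [frontier_eq_closure_inter_closure]
    constructor
    · rw [Metric.mem_closure_iff]
      intro ε hε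
      set t := max 0 (g a - ε/2) with ht
      have ht0 : 0 ≤ t := le_max_left _ _
      have htlt : t < g a := by
        rcases le_or_gt 0 (g a - ε/2) with h | h
        · rw [ht, max_eq_right h]; linarith
        · rw [ht, max_eq_left h.le]; exact hgpos
      have htS : (x + (a:ℂ) + t*Complex.I) ∈ S := by
        by_contra hns
        have hmem : t ∈ T a := ⟨ht0, hns⟩
        have h2 : g a ≤ t := csInf_le (hTbdd a) hmem
        linarith
      refine ⟨_, htS, ?_⟩
      rw [hdistF, abs_of_nonneg (by linarith)]
      rcases le_or_gt 0 (g a - ε/2) with h | h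
      · rw [ht, max_eq_right h]; linarith
      · rw [ht, max_eq_left h.le]; linarith
    · rw [Metric.mem_closure_iff]
      intro ε hε
      obtain ⟨t, htT, htlt⟩ := Real.lt_sInf_add_pos (hTne a) hε
      have hge : g a ≤ t := csInf_le (hTbdd a) htT
      have htlt' : t < g a + ε := htlt
      refine ⟨x + (a:ℂ) + t*Complex.I, htT.2, ?_⟩
      rw [hdistF, abs_of_nonpos (by linarith)]
      linarith
  have hsub : Set.Ioo (-(δ/2)) (δ/2) ⊆ F ⁻¹' (frontier S) := by
    intro a ha
    exact hfront a (abs_lt.mpr ⟨ha.1, ha.2⟩)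
  have hcnt : (Set.Ioo (-(δ/2)) (δ/2)).Countable :=
    Set.Countable.mono hsub (hc.preimage hFinj)
  have hm := hcnt.measure_zero MeasureTheory.volume
  rw [Real.volume_Ioo] at hm
  rw [ENNReal.ofReal_eq_zero] at hm
  linarith

section Main

variable {E : Type*} [NormedAddCommGroup E] [NormedSpace ℂ E] [CompleteSpace E]

lemma rieszish (F : Submodule ℂ E) (hFc : IsClosed (F : Set E)) {v : E} (hv : v ∉ F) :
    ∃ y : E, ‖y‖ = 1 ∧ y ∈ (Submodule.span ℂ {v}) ⊔ F ∧ ∀ w ∈ F, (1:ℝ)/2 ≤ ‖y - w‖ := by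
  set d := Metric.infDist v (F : Set E) with hd
  have hFn : (F : Set E).Nonempty := ⟨0, F.zero_mem⟩
  have hdp : 0 < d := by
    rcases lt_or_eq_of_le (Metric.infDist_nonneg (s := (F : Set E)) (x := v)) with h | h
    · exact h
    · exact absurd ((hFc.mem_iff_infDist_zero hFn).2 h.symm) hv
  obtain ⟨w₀, hw₀F, hw₀⟩ : ∃ w ∈ (F : Set E), dist v w < 2 * d := by
    apply (Metric.infDist_lt_iff hFn).mp
    linarith
  have hvw : v - w₀ ≠ 0 := by
    intro h
    exact hv (by simpa [sub_eq_zero.mp h] using hw₀F)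
  have hnvw : 0 < ‖v - w₀‖ := norm_pos_iff.mpr hvw
  refine ⟨‖v - w₀‖⁻¹ • (v - w₀), ?_, ?_, ?_⟩
  · simp [norm_smul, hnvw.ne']
  · have h1 : v ∈ (Submodule.span ℂ {v}) ⊔ F := Submodule.mem_sup_left (Submodule.mem_span_singleton_self v)
    have h2 : w₀ ∈ (Submodule.span ℂ {v}) ⊔ F := Submodule.mem_sup_right hw₀F
    exact Submodule.smul_mem _ _ (Submodule.sub_mem _ h1 h2)
  · intro w hw
    have key : ‖v - w₀‖⁻¹ • (v - w₀) - w = ‖v - w₀‖⁻¹ • (v - (w₀ + ‖v - w₀‖ • w)) := by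
      rw [smul_sub, smul_sub, smul_add, smul_smul, inv_mul_cancel₀ hnvw.ne', one_smul]
      abel
    rw [key, norm_smul]
    have hmem : w₀ + ‖v - w₀‖ • w ∈ (F : Set E) := F.add_mem hw₀F (F.smul_mem _ hw)
    have hge : d ≤ ‖v - (w₀ + ‖v - w₀‖ • w)‖ := by
      simpa [dist_eq_norm] using Metric.infDist_le_dist_of_mem hmem
    have h2 : ‖v - w₀‖ < 2 * d := by simpa [dist_eq_norm] using hw₀
    have hns : ‖(‖v - w₀‖⁻¹ : ℝ)‖ = ‖v - w₀‖⁻¹ := by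
      rw [Real.norm_eq_abs, abs_of_nonneg (inv_nonneg.mpr hnvw.le)]
    rw [hns]
    have hd0 : (0:ℝ) ≤ d := hdp.le
    calc (1:ℝ)/2 = (2*d)⁻¹ * d := by field_simp
    _ ≤ ‖v - w₀‖⁻¹ * ‖v - (w₀ + ‖v - w₀‖ • w)‖ := by
        have h1 : ‖v - w₀‖⁻¹ ≥ (2*d)⁻¹ := inv_anti₀ hnvw h2.le
        nlinarith [hge, inv_nonneg.mpr hnvw.le, hdp, mul_pos (by linarith : (0:ℝ) < 2*d) hdp]

lemma seq_cpt (K : E →L[ℂ] E) (hK : IsCompactOperator K) (x : ℕ → E)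
    (hx : ∀ n, ‖x n‖ ≤ 1) :
    ∃ (l : E) (φ : ℕ → ℕ), StrictMono φ ∧ Tendsto (fun n => K (x (φ n))) atTop (nhds l) := by
  obtain ⟨C, hC, hsub⟩ := hK.image_closedBall_subset_compact 1
  have hmem : ∀ n, K (x n) ∈ C := fun n =>
    hsub ⟨x n, by simpa [Metric.mem_closedBall, dist_eq_norm] using hx n, rfl⟩
  obtain ⟨l, _, φ, hφ, hconv⟩ := hC.tendsto_subseq hmem
  exact ⟨l, φ, hφ, hconv⟩

lemma approx_eig (K : E →L[ℂ] E) (hK : IsCompactOperator K) {μ : ℂ} (hμ : μ ≠ 0)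
    (x : ℕ → E) (hx : ∀ n, ‖x n‖ = 1)
    (hconv : Tendsto (fun n => K (x n) - μ • x n) atTop (nhds 0)) :
    Module.End.HasEigenvalue (K : E →ₗ[ℂ] E) μ := by
  obtain ⟨l, φ, hφ, hl⟩ := seq_cpt K hK x (fun n => (hx n).le)
  have hsub : Tendsto (fun n => K (x (φ n)) - μ • x (φ n)) atTop (nhds 0) :=
    hconv.comp hφ.tendsto_atTop
  have hμx : Tendsto (fun n => μ • x (φ n)) atTop (nhds l) := by
    have := hl.sub hsub
    simpa using this
  have hxφ : Tendsto (fun n => x (φ n)) atTop (nhds (μ⁻¹ • l)) := by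
    have := hμx.const_smul μ⁻¹
    simpa [smul_smul, inv_mul_cancel₀ hμ] using this
  set u := μ⁻¹ • l with hu
  have hnu : ‖u‖ = 1 := by
    have h1 : Tendsto (fun n => ‖x (φ n)‖) atTop (nhds ‖u‖) := hxφ.norm
    have h2 : (fun n => ‖x (φ n)‖) = fun _ => (1:ℝ) := funext fun n => hx (φ n)
    rw [h2] at h1
    exact (tendsto_const_nhds_iff.mp h1).symm
  have hu0 : u ≠ 0 := fun h => by rw [h, norm_zero] at hnu; linarith
  have hKu : K u = μ • u := by
    have h1 : Tendsto (fun n => K (x (φ n))) atTop (nhds (K u)) :=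
      (K.continuous.tendsto u).comp hxφ
    have h2 : K u = l := tendsto_nhds_unique h1 hl
    rw [h2, hu, smul_smul, mul_inv_cancel₀ hμ, one_smul]
  exact Module.End.hasEigenvalue_of_hasEigenvector
    ⟨Module.End.mem_eigenspace_iff.mpr (by exact hKu), hu0⟩

lemma eig_finite_s5 (K : E →L[ℂ] E) (hK : IsCompactOperator K) {r : ℝ} (hr : 0 < r) :
    Set.Finite {μ : ℂ | r ≤ ‖μ‖ ∧ Module.End.HasEigenvalue (K : E →ₗ[ℂ] E) μ} := by
  by_contra hinf
  replace hinf : {μ : ℂ | r ≤ ‖μ‖ ∧ Module.End.HasEigenvalue (K : E →ₗ[ℂ] E) μ}.Infinite :=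
    hinf
  set μ : ℕ → ℂ := fun n => (hinf.natEmbedding _ n : ℂ) with hμdef
  have hμinj : Function.Injective μ := fun a b h =>
    (hinf.natEmbedding _).injective (Subtype.ext h)
  have hμmem : ∀ n, r ≤ ‖μ n‖ ∧ Module.End.HasEigenvalue (K : E →ₗ[ℂ] E) (μ n) :=
    fun n => (hinf.natEmbedding _ n).2
  -- choose eigenvectors
  have hev : ∀ n, ∃ v : E, Module.End.HasEigenvector (K : E →ₗ[ℂ] E) (μ n) v := fun n =>
    (hμmem n).2.exists_hasEigenvector
  choose v hv using hev
  have hli : LinearIndependent ℂ v :=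
    Module.End.eigenvectors_linearIndependent' (K : E →ₗ[ℂ] E) μ hμinj v hv
  -- nested spans
  set M : ℕ → Submodule ℂ E := fun n => Submodule.span ℂ (v '' Set.Iic n) with hM
  have hMfd : ∀ n, FiniteDimensional ℂ (M n) := fun n =>
    FiniteDimensional.span_of_finite ℂ ((Set.finite_Iic n).image v)
  have hMclosed : ∀ n, IsClosed ((M n : Set E)) := fun n =>
    letI := hMfd n; (M n).closed_of_finiteDimensional
  have hMmono : ∀ {a b : ℕ}, a ≤ b → M a ≤ M b := fun {a b} h =>
    Submodule.span_mono (Set.image_mono (Set.Iic_subset_Iic.mpr h))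
  have hvnot : ∀ n, v (n+1) ∉ M n := fun n =>
    hli.notMem_span_image (by simp)
  -- Riesz sequence
  have hy : ∀ n, ∃ y : E, ‖y‖ = 1 ∧ y ∈ M (n+1) ∧ ∀ w ∈ M n, (1:ℝ)/2 ≤ ‖y - w‖ := by
    intro n
    obtain ⟨y, hy1, hy2, hy3⟩ := rieszish (M n) (hMclosed n) (hvnot n)
    refine ⟨y, hy1, ?_, hy3⟩
    have h1 : Submodule.span ℂ {v (n+1)} ≤ M (n+1) := by
      rw [Submodule.span_le]
      intro x hx
      rcases hx with rfl
      exact Submodule.subset_span ⟨n+1, by simp, rfl⟩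
    exact sup_le h1 (hMmono (Nat.le_succ n)) hy2
  choose y hy1 hy2 hy3 using hy
  -- K maps M n into M n
  have hKM : ∀ n, ∀ x ∈ M n, K x ∈ M n := by
    intro n x hx
    induction hx using Submodule.span_induction with
    | mem x hx =>
      obtain ⟨i, hi, rfl⟩ := hx
      have : K (v i) = μ i • v i := (hv i).apply_eq_smul
      rw [this]
      exact Submodule.smul_mem _ _ (Submodule.subset_span ⟨i, hi, rfl⟩)
    | zero => simpa using (M n).zero_mem
    | add a b _ _ ha hb => simpa using (M n).add_mem ha hb
    | smul c a _ ha => simpa using (M n).smul_mem c ha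
  -- the key displacement estimate
  have hkey : ∀ m n : ℕ, m < n → r / 2 ≤ ‖K (y n) - K (y m)‖ := by
    intro m n hmn
    have hμn0 : μ (n+1) ≠ 0 := fun h => by
      have := (hμmem (n+1)).1; rw [h, norm_zero] at this; linarith
    -- (μ(n+1) • u - K u) ∈ M n for u ∈ M (n+1)
    have hshift : ∀ u ∈ M (n+1), μ (n+1) • u - K u ∈ M n := by
      intro u hu
      induction hu using Submodule.span_induction with
      | mem x hx =>
        obtain ⟨i, hi, rfl⟩ := hx
        have : K (v i) = μ i • v i := (hv i).apply_eq_smul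
        rw [this, ← sub_smul]
        rcases Nat.lt_or_ge i (n+1) with h | h
        · exact Submodule.smul_mem _ _ (Submodule.subset_span ⟨i, Nat.lt_succ_iff.mp h, rfl⟩)
        · have : i = n+1 := le_antisymm (Set.mem_Iic.mp hi) h
          rw [this]; simp
      | zero => simpa using (M n).zero_mem
      | add a b _ _ ha hb =>
        have := (M n).add_mem ha hb
        simpa [smul_add, map_add, add_sub_add_comm] using this
      | smul c a _ ha =>
        have := (M n).smul_mem c ha
        simpa [smul_sub, smul_comm c, map_smul] using this
    have hw : (μ (n+1) • y n - K (y n)) + K (y m) ∈ M n := by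
      apply (M n).add_mem (hshift _ (hy2 n))
      exact hMmono (by omega : m + 1 ≤ n) (hKM (m+1) _ (hy2 m))
    set w := (μ (n+1) • y n - K (y n)) + K (y m) with hwdef
    have heq : K (y n) - K (y m) = μ (n+1) • (y n - (μ (n+1))⁻¹ • w) := by
      rw [smul_sub, smul_smul, mul_inv_cancel₀ hμn0, one_smul, hwdef]
      abel
    have hwm : (μ (n+1))⁻¹ • w ∈ M n := (M n).smul_mem _ hw
    rw [heq, norm_smul]
    have h1 : (1:ℝ)/2 ≤ ‖y n - (μ (n+1))⁻¹ • w‖ := hy3 n _ hwm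
    have h2 : r ≤ ‖μ (n+1)‖ := (hμmem (n+1)).1
    calc r/2 = r * (1/2) := by ring
    _ ≤ ‖μ (n+1)‖ * ‖y n - (μ (n+1))⁻¹ • w‖ :=
        mul_le_mul h2 h1 (by norm_num) (le_trans hr.le h2)
  -- contradiction with compactness
  obtain ⟨l, φ, hφ, hconv⟩ := seq_cpt K hK y (fun n => (hy1 n).le)
  have hcauchy := hconv.cauchySeq
  rw [Metric.cauchySeq_iff] at hcauchy
  obtain ⟨N, hN⟩ := hcauchy (r/2) (by linarith)
  have h1 := hN (N+1) (by omega) N (by omega)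
  have h2 := hkey (φ N) (φ (N+1)) (hφ (by omega))
  rw [dist_eq_norm] at h1
  linarith

lemma frontier_approx [Nontrivial E] (K : E →L[ℂ] E) {μ : ℂ}
    (hμ : μ ∈ frontier (spectrum ℂ K)) :
    ∀ ε > 0, ∃ x : E, ‖x‖ = 1 ∧ ‖K x - μ • x‖ < ε := by
  intro ε hε
  have hμσ : μ ∈ spectrum ℂ K :=
    (spectrum.isClosed (𝕜 := ℂ) K).closure_subset (hμ.1 : μ ∈ closure (spectrum ℂ K))
  have hμc : μ ∈ closure (spectrum ℂ K)ᶜ := by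
    rw [frontier_eq_closure_inter_closure] at hμ
    exact hμ.2
  -- find ν ∉ σ close to μ with large resolvent
  obtain ⟨ν, hν, hνclose, hνbig⟩ :
      ∃ ν, ν ∉ spectrum ℂ K ∧ dist μ ν < ε/4 ∧
        ∀ (u : (E →L[ℂ] E)ˣ), (u : E →L[ℂ] E) = algebraMap ℂ (E →L[ℂ] E) ν - K →
          4/ε ≤ ‖((u⁻¹ : (E →L[ℂ] E)ˣ) : E →L[ℂ] E)‖ := by
    by_contra hcon
    push_neg at hcon
    obtain ⟨ν, hν1, hν2⟩ := Metric.mem_closure_iff.mp hμc (ε/4) (by linarith)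
    rw [Set.mem_compl_iff] at hν1
    obtain ⟨u, hu, hsmall⟩ := hcon ν hν1 hν2
    have hnorm : ‖(algebraMap ℂ (E →L[ℂ] E) μ - K) - (u : E →L[ℂ] E)‖ <
        ‖((u⁻¹ : (E →L[ℂ] E)ˣ) : E →L[ℂ] E)‖⁻¹ := by
      rw [hu]
      have : (algebraMap ℂ (E →L[ℂ] E) μ - K) - (algebraMap ℂ (E →L[ℂ] E) ν - K)
          = algebraMap ℂ (E →L[ℂ] E) (μ - ν) := by
        rw [map_sub]; abel
      rw [this]
      have h1 : ‖algebraMap ℂ (E →L[ℂ] E) (μ - ν)‖ = ‖μ - ν‖ := by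
        rw [Algebra.algebraMap_eq_smul_one, norm_smul, norm_one, mul_one]
      rw [h1]
      have h2 : ‖μ - ν‖ < ε/4 := by rwa [dist_eq_norm] at hν2
      have hpos : 0 < ‖((u⁻¹ : (E →L[ℂ] E)ˣ) : E →L[ℂ] E)‖ := Units.norm_pos u⁻¹
      have h3 : (4/ε)⁻¹ < ‖((u⁻¹ : (E →L[ℂ] E)ˣ) : E →L[ℂ] E)‖⁻¹ :=
        inv_strictAnti₀ hpos hsmall
      have h4 : (4/ε)⁻¹ = ε/4 := by field_simp
      linarith
    have : IsUnit (algebraMap ℂ (E →L[ℂ] E) μ - K) := (u.ofNearby _ hnorm).isUnit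
    exact (spectrum.notMem_iff.mpr this) hμσ
  -- now build the approximate eigenvector
  have hν' : IsUnit (algebraMap ℂ (E →L[ℂ] E) ν - K) := spectrum.notMem_iff.mp hν
  obtain ⟨u, hu⟩ := hν'
  set R : E →L[ℂ] E := ((u⁻¹ : (E →L[ℂ] E)ˣ) : E →L[ℂ] E) with hR
  have hRbig : 4/ε ≤ ‖R‖ := hνbig u hu
  have hRpos : 0 < ‖R‖ := lt_of_lt_of_le (by positivity) hRbig
  obtain ⟨x₀, hx₀⟩ := ContinuousLinearMap.exists_lt_apply_of_lt_opNorm R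
    (show ‖R‖/2 < ‖R‖ by linarith)
  have hvec : R x₀ ≠ 0 := by
    intro h
    rw [h, norm_zero] at hx₀
    nlinarith [hx₀.2, hRpos]
  have hx₀0 : x₀ ≠ 0 := by
    intro h; rw [h] at hvec; exact hvec (map_zero R)
  set vec := R x₀ with hvecdef
  have hnv : 0 < ‖vec‖ := norm_pos_iff.mpr hvec
  refine ⟨‖vec‖⁻¹ • vec, by simp [norm_smul, hnv.ne'], ?_⟩
  have happ : (algebraMap ℂ (E →L[ℂ] E) ν - K) vec = x₀ := by
    have : (algebraMap ℂ (E →L[ℂ] E) ν - K) * R = 1 := by rw [← hu, hR]; exact u.mul_inv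
    calc (algebraMap ℂ (E →L[ℂ] E) ν - K) vec
        = ((algebraMap ℂ (E →L[ℂ] E) ν - K) * R) x₀ := rfl
    _ = x₀ := by rw [this]; rfl
  have hKvec : K vec - μ • vec = (ν - μ) • vec - x₀ := by
    have h1 : (algebraMap ℂ (E →L[ℂ] E) ν - K) vec = ν • vec - K vec := by
      simp [Algebra.algebraMap_eq_smul_one, ContinuousLinearMap.sub_apply,
        ContinuousLinearMap.smul_apply]
    rw [h1] at happ
    rw [sub_smul]
    rw [← happ]
    abel
  have : K (‖vec‖⁻¹ • vec) - μ • (‖vec‖⁻¹ • vec) = ‖vec‖⁻¹ • (K vec - μ • vec) := by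
    rw [K.map_smul_of_tower, smul_sub, smul_comm]
  rw [this, hKvec, norm_smul]
  have hb : ‖(ν - μ) • vec - x₀‖ ≤ ‖ν - μ‖ * ‖vec‖ + ‖x₀‖ := by
    calc ‖(ν - μ) • vec - x₀‖ ≤ ‖(ν - μ) • vec‖ + ‖x₀‖ := norm_sub_le _ _
    _ = ‖ν - μ‖ * ‖vec‖ + ‖x₀‖ := by rw [norm_smul]
  have hνμ : ‖ν - μ‖ < ε/4 := by rw [norm_sub_rev]; rwa [dist_eq_norm] at hνclose
  have hx₀n : 0 < ‖x₀‖ := norm_pos_iff.mpr hx₀0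
  have hvb : ‖R‖/2 < ‖vec‖ := hx₀.2
  have hx₀1 : ‖x₀‖ < 1 := hx₀.1
  have hRb : 2/‖R‖ ≤ ε/2 := by
    rw [div_le_iff₀ hRpos]
    calc (2:ℝ) = ε/2 * (4/ε) := by field_simp; ring
    _ ≤ ε/2 * ‖R‖ := by apply mul_le_mul_of_nonneg_left hRbig; linarith
  have hfrac : ‖x₀‖ / ‖vec‖ < 2/‖R‖ := by
    rw [div_lt_div_iff₀ hnv hRpos]
    nlinarith
  have hns : ‖(‖vec‖⁻¹ : ℝ)‖ = ‖vec‖⁻¹ := by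
    rw [Real.norm_eq_abs, abs_of_nonneg (inv_nonneg.mpr hnv.le)]
  rw [hns]
  calc ‖vec‖⁻¹ * ‖(ν - μ) • vec - x₀‖ ≤ ‖vec‖⁻¹ * (‖ν - μ‖ * ‖vec‖ + ‖x₀‖) := by
        apply mul_le_mul_of_nonneg_left hb (inv_nonneg.mpr hnv.le)
  _ = ‖ν - μ‖ + ‖x₀‖ / ‖vec‖ := by field_simp
  _ < ε/4 + 2/‖R‖ := by linarith
  _ ≤ ε/4 + ε/2 := by linarith
  _ < ε := by linarith

theorem compact_acc (K : E →L[ℂ] E) (hK : IsCompactOperator K) {z : ℂ}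
    (hz : AccPt z (𝓟 (spectrum ℂ K))) : z = 0 := by
  rcases subsingleton_or_nontrivial E with hE | hE
  · exfalso
    have hempty : spectrum ℂ K = ∅ := by
      ext μ
      simp only [Set.mem_empty_iff_false, iff_false]
      intro hmem
      exact spectrum.notMem_iff.mpr (isUnit_of_subsingleton _) hmem
    rw [hempty] at hz
    rw [accPt_iff_nhds] at hz
    obtain ⟨y, hy, -⟩ := hz Set.univ Filter.univ_mem
    exact hy.2
  by_contra hz0
  set r : ℝ := ‖z‖/2 with hr
  have hrpos : 0 < r := by
    have : 0 < ‖z‖ := norm_pos_iff.mpr hz0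
    rw [hr]; linarith
  -- every nonzero frontier point of the spectrum is an eigenvalue
  have hfe : ∀ μ ∈ frontier (spectrum ℂ K), μ ≠ 0 →
      Module.End.HasEigenvalue (K : E →ₗ[ℂ] E) μ := by
    intro μ hμf hμ0
    have happ := frontier_approx K hμf
    have hex : ∀ n : ℕ, ∃ x : E, ‖x‖ = 1 ∧ ‖K x - μ • x‖ < 1/(n+1) :=
      fun n => happ (1/(n+1)) (by positivity)
    choose x hx1 hx2 using hex
    apply approx_eig K hK hμ0 x hx1
    rw [tendsto_zero_iff_norm_tendsto_zero]
    apply squeeze_zero (fun n => norm_nonneg _) (fun n => (hx2 n).le)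
    exact tendsto_one_div_add_atTop_nhds_zero_nat
  -- the frontier of the spectrum is countable
  have hcf : (frontier (spectrum ℂ K)).Countable := by
    have hsub : frontier (spectrum ℂ K) ⊆
        {0} ∪ ⋃ n : ℕ, {μ : ℂ | 1/(n+1) ≤ ‖μ‖ ∧ Module.End.HasEigenvalue (K : E →ₗ[ℂ] E) μ} := by
      intro μ hμ
      rcases eq_or_ne μ 0 with h | h
      · exact Or.inl h
      · right
        obtain ⟨n, hn⟩ := exists_nat_one_div_lt (norm_pos_iff.mpr h)
        exact Set.mem_iUnion.mpr ⟨n, ⟨by push_cast at hn ⊢; linarith, hfe μ hμ h⟩⟩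
    apply Set.Countable.mono hsub
    apply Set.Countable.union (Set.countable_singleton 0)
    exact Set.countable_iUnion (fun n => (eig_finite_s5 K hK (by positivity)).countable)
  -- hence the spectrum has empty interior, so it equals its frontier
  have hint : interior (spectrum ℂ K) = ∅ :=
    countable_frontier_interior (spectrum.isCompact K) hcf
  have hself : spectrum ℂ K = frontier (spectrum ℂ K) := by
    rw [frontier, hint, Set.diff_empty, (spectrum.isClosed (𝕜 := ℂ) K).closure_eq]
  -- spectrum outside the disc of radius r is finite
  have hfin : Set.Finite (spectrum ℂ K ∩ {μ : ℂ | r ≤ ‖μ‖}) := by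
    apply Set.Finite.subset (eig_finite_s5 K hK hrpos)
    rintro μ ⟨hμσ, hμr⟩
    rw [Set.mem_setOf_eq] at hμr
    have hμ0 : μ ≠ 0 := by
      intro h; rw [h, norm_zero] at hμr; linarith
    exact ⟨hμr, hfe μ (hself ▸ hμσ) hμ0⟩
  -- contradiction with accumulation
  rw [accPt_iff_nhds] at hz
  set Fin := (spectrum ℂ K ∩ {μ : ℂ | r ≤ ‖μ‖}) \ {z} with hFin
  have hFinz : z ∉ Fin := fun h => h.2 rfl
  have hFincl : IsClosed Fin := (hfin.subset Set.diff_subset).isClosed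
  have hU : (Metric.ball z r ∩ Finᶜ) ∈ nhds z :=
    Filter.inter_mem (Metric.ball_mem_nhds z hrpos) (hFincl.isOpen_compl.mem_nhds hFinz)
  obtain ⟨y, ⟨⟨hyb, hyF⟩, hyσ⟩, hyz⟩ := hz _ hU
  apply hyF
  refine ⟨⟨hyσ, ?_⟩, hyz⟩
  rw [Set.mem_setOf_eq]
  have hd : dist y z < r := Metric.mem_ball.mp hyb
  have : ‖z‖ - ‖y‖ ≤ dist y z := by
    rw [dist_eq_norm, norm_sub_rev]
    exact norm_sub_norm_le _ _
  rw [hr] at *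
  linarith

end Main

lemma acc_pullback {S : Set ℂ} (hS : IsCompact S) {f : ℂ → ℂ} (hf : Continuous f) {z : ℂ}
    (hz : AccPt z (𝓟 (f '' S))) : ∃ w ∈ S, f w = z ∧ AccPt w (𝓟 S) := by
  rw [accPt_iff_nhds] at hz
  have hex : ∀ n : ℕ, ∃ y : ℂ, y ∈ Metric.ball z (1/(n+1)) ∩ (f '' S) ∧ y ≠ z := fun n =>
    hz _ (Metric.ball_mem_nhds z (by positivity))
  choose y hy hyz using hex
  have hyS : ∀ n, y n ∈ f '' S := fun n => (hy n).2
  choose w hwS hwfy using hyS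
  obtain ⟨l, hlS, φ, hφ, hconv⟩ := hS.tendsto_subseq hwS
  have hyconv : Tendsto y atTop (nhds z) := by
    rw [tendsto_iff_dist_tendsto_zero]
    apply squeeze_zero (fun n => dist_nonneg)
      (fun n => (Metric.mem_ball.mp (hy n).1).le)
    exact tendsto_one_div_add_atTop_nhds_zero_nat
  have hfl : f l = z := by
    have h1 : Tendsto (fun n => f (w (φ n))) atTop (nhds (f l)) :=
      (hf.tendsto l).comp hconv
    have h2 : (fun n => f (w (φ n))) = fun n => y (φ n) := funext fun n => hwfy (φ n)
    rw [h2] at h1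
    exact tendsto_nhds_unique h1 (hyconv.comp hφ.tendsto_atTop)
  refine ⟨l, hlS, hfl, ?_⟩
  rw [accPt_iff_nhds]
  intro U hU
  obtain ⟨n, hn⟩ := (hconv.eventually_mem hU).exists
  refine ⟨w (φ n), ⟨hn, hwS (φ n)⟩, ?_⟩
  intro h
  apply hyz (φ n)
  rw [← hwfy (φ n), h, hfl]

lemma acc_pushforward {S : Set ℂ} {p : Polynomial ℂ} (hp : 0 < p.degree) {w : ℂ}
    (hw : AccPt w (𝓟 S)) : AccPt (p.eval w) (𝓟 ((fun x => p.eval x) '' S)) := by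
  rw [accPt_iff_nhds] at hw ⊢
  intro U hU
  have hnc : p - Polynomial.C (p.eval w) ≠ 0 := by
    intro h
    rw [sub_eq_zero] at h
    rw [h] at hp
    exact absurd (lt_of_lt_of_le hp (Polynomial.degree_C_le)) (by simp)
  have hroots : Set.Finite {x : ℂ | p.eval x = p.eval w} := by
    apply Set.Finite.subset (Polynomial.finite_setOf_isRoot hnc)
    intro x hx
    rw [Set.mem_setOf_eq] at hx
    show (p - Polynomial.C (p.eval w)).IsRoot x
    rw [Polynomial.IsRoot, Polynomial.eval_sub, Polynomial.eval_C, hx, sub_self]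
  set Z := {x : ℂ | p.eval x = p.eval w} with hZ
  have hZc : IsClosed (Z \ {w}) := (hroots.subset Set.diff_subset).isClosed
  have hwZ : w ∉ Z \ {w} := fun h => h.2 rfl
  have hV : (Z \ {w})ᶜ ∩ (fun x => p.eval x) ⁻¹' U ∈ nhds w := by
    apply Filter.inter_mem (hZc.isOpen_compl.mem_nhds hwZ)
    exact (p.continuous_aeval.continuousAt (x := w)).preimage_mem_nhds (by simpa using hU)
  obtain ⟨y, ⟨⟨hyZ, hyU⟩, hyS⟩, hyw⟩ := hw _ hV
  refine ⟨p.eval y, ⟨hyU, ⟨y, hyS, rfl⟩⟩, ?_⟩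
  intro h
  exact hyZ ⟨h, hyw⟩

theorem stmt5 {E : Type*} [NormedAddCommGroup E] [NormedSpace ℂ E] [CompleteSpace E]
    (T P : E →L[ℂ] E) (hP : P ∘L P = P) (c : ℂ) (q : Polynomial ℂ)
    (hcpt : IsCompactOperator (T ∘L T - c ^ 2 • P))
    (z : ℂ) (hz : AccPt z (𝓟 (spectrum ℂ (Polynomial.aeval T q : E →L[ℂ] E)))) :
    z ∈ ({q.eval 0, q.eval c, q.eval (-c)} : Set ℂ) := by
  rcases subsingleton_or_nontrivial E with hE | hE
  · exfalso
    have hempty : spectrum ℂ (Polynomial.aeval T q : E →L[ℂ] E) = ∅ := by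
      ext μ
      simp only [Set.mem_empty_iff_false, iff_false]
      exact fun hmem => spectrum.notMem_iff.mpr (isUnit_of_subsingleton _) hmem
    rw [hempty, accPt_iff_nhds] at hz
    obtain ⟨y, hy, -⟩ := hz Set.univ Filter.univ_mem
    exact hy.2
  -- spectral mapping for q
  have hσq : spectrum ℂ (Polynomial.aeval T q : E →L[ℂ] E)
      = (fun k => q.eval k) '' spectrum ℂ T := spectrum.map_polynomial_aeval T q
  rw [hσq] at hz
  obtain ⟨w, hwσ, hwq, hwacc⟩ := acc_pullback (spectrum.isCompact T) q.continuous_aeval hz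
  -- the polynomial p = X^4 - c^2 X^2
  set p : Polynomial ℂ := X^4 - C (c^2) * X^2 with hp
  have hdeg : 0 < p.degree := by
    have hnd : p.natDegree = 4 := by rw [hp]; compute_degree!
    have : p ≠ 0 := fun h => by rw [h] at hnd; simp at hnd
    rw [Polynomial.degree_eq_natDegree this, hnd]
    norm_num
  have hpush := acc_pushforward hdeg hwacc
  rw [← spectrum.map_polynomial_aeval T p] at hpush
  -- aeval T p is a compact operator
  have hop : (Polynomial.aeval T p : E →L[ℂ] E)
      = (T ∘L T) ∘L (T ∘L T - c^2 • P) + c^2 • ((T ∘L T - c^2 • P) ∘L P)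
        - c^2 • (T ∘L T - c^2 • P) := by
    have h1 : (Polynomial.aeval T p : E →L[ℂ] E) = T^4 - c^2 • T^2 := by
      rw [hp]
      simp only [map_sub, map_mul, map_pow, aeval_X, aeval_C]
      rw [Algebra.smul_def, map_pow]
    rw [h1]
    have hPP : P * P = P := hP
    have h4 : (T:E →L[ℂ] E)^4 = (T*T)*(T*T) := by rw [show 4 = 2+2 from rfl, pow_add, pow_two]
    have h2 : (T:E →L[ℂ] E)^2 = T*T := pow_two T
    show T^4 - c^2 • T^2 = (T*T) * (T*T - c^2 • P) + c^2 • ((T*T - c^2 • P) * P)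
      - c^2 • (T*T - c^2 • P)
    rw [h4, h2, mul_sub, sub_mul, smul_sub, smul_sub, mul_smul_comm, smul_mul_assoc, hPP,
      smul_smul]
    abel
  have hKp : IsCompactOperator (Polynomial.aeval T p : E →L[ℂ] E) := by
    have e1 : IsCompactOperator (⇑(T ∘L T) ∘ ⇑(T ∘L T - c^2 • P)) :=
      hcpt.clm_comp (T ∘L T)
    have e2 : IsCompactOperator (⇑(T ∘L T - c^2 • P) ∘ ⇑P) := hcpt.comp_clm P
    have e3 := (e1.add (e2.smul (c^2))).sub (hcpt.smul (c^2))
    have : ⇑(Polynomial.aeval T p : E →L[ℂ] E)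
        = (⇑(T ∘L T) ∘ ⇑(T ∘L T - c^2 • P) + c^2 • (⇑(T ∘L T - c^2 • P) ∘ ⇑P))
          - c^2 • ⇑(T ∘L T - c^2 • P) := by
      rw [hop]
      ext x
      simp [ContinuousLinearMap.comp_apply]
    rw [this]
    exact e3
  have hpw : p.eval w = 0 := compact_acc _ hKp hpush
  have h0 : w^4 - c^2 * w^2 = 0 := by
    rw [hp] at hpw
    simpa using hpw
  have hw3 : w = 0 ∨ w = c ∨ w = -c := by
    have hfac : w^2 * ((w - c) * (w + c)) = 0 := by ring_nf; linear_combination h0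
    rcases mul_eq_zero.mp hfac with h | h
    · left; exact pow_eq_zero_iff (by norm_num) |>.mp h
    · rcases mul_eq_zero.mp h with h | h
      · right; left; exact sub_eq_zero.mp h
      · right; right; linear_combination h
  rcases hw3 with h | h | h <;> rw [← hwq, h] <;> simp
end

section
/- Let λ, μ ∈ ℝ, let ν ∈ ℝ², let U ⊆ ℝ² be open, and let p : U → ℝ be twice continuously differentiable on U. Then at every x ∈ U the identity T(∂,ν)(∇p) = (λ + 2μ)(Δp)ν + 2μ M(∂,ν)(∇p) holds. -/
/-- `pd w x k j` is the partial derivative `∂ₖ wⱼ` of the vector field `w : ℝ² → ℝ²`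
at the point `x`, indexed so that `k = 0, 1` corresponds to `∂₁, ∂₂`. -/
noncomputable def pd (w : (Fin 2 → ℝ) → (Fin 2 → ℝ)) (x : Fin 2 → ℝ) (k j : Fin 2) : ℝ :=
  fderiv ℝ w x (Pi.single k 1) j

/-- `grad p y` is the gradient `∇p = (∂₁p, ∂₂p)` of a scalar field `p : ℝ² → ℝ` at `y`. -/
noncomputable def grad (p : (Fin 2 → ℝ) → ℝ) (y : Fin 2 → ℝ) (j : Fin 2) : ℝ :=
  fderiv ℝ p y (Pi.single j 1)

lemma pd_grad_eq (p : (Fin 2 → ℝ) → ℝ) (x : Fin 2 → ℝ) (hp : ContDiffAt ℝ 2 p x)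
    (k j : Fin 2) :
    pd (grad p) x k j = fderiv ℝ (fderiv ℝ p) x (Pi.single k 1) (Pi.single j 1) := by
  have hd : DifferentiableAt ℝ (fderiv ℝ p) x := by
    have : ContDiffAt ℝ 1 (fderiv ℝ p) x := hp.fderiv_right (by norm_num)
    exact this.differentiableAt (by norm_num)
  set Φ : ((Fin 2 → ℝ) →L[ℝ] ℝ) →L[ℝ] (Fin 2 → ℝ) :=
    ContinuousLinearMap.pi (fun j => ContinuousLinearMap.apply ℝ ℝ (Pi.single j 1))
  have hgrad : grad p = Φ ∘ fderiv ℝ p := rfl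
  have : fderiv ℝ (grad p) x = Φ.comp (fderiv ℝ (fderiv ℝ p) x) := by
    rw [hgrad]
    exact (Φ.hasFDerivAt.comp x hd.hasFDerivAt).fderiv
  simp [pd, this, Φ]

lemma pd_grad_symm (p : (Fin 2 → ℝ) → ℝ) (x : Fin 2 → ℝ) (hp : ContDiffAt ℝ 2 p x)
    (k j : Fin 2) : pd (grad p) x k j = pd (grad p) x j k := by
  rw [pd_grad_eq p x hp, pd_grad_eq p x hp]
  exact (hp.isSymmSndFDerivAt (by simp)) _ _

theorem stmt10 (lam mu : ℝ) (ν : Fin 2 → ℝ) (U : Set (Fin 2 → ℝ)) (hU : IsOpen U)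
    (p : (Fin 2 → ℝ) → ℝ) (hp : ContDiffOn ℝ 2 p U) :
    ∀ x ∈ U, ∀ j : Fin 2,
      -- T(∂,ν)(∇p) = 2μ ∂_ν(∇p) + λ(∇·∇p)ν + μ(∂₂(∇p)₁ − ∂₁(∇p)₂)ν^⊥
      2 * mu * (ν 0 * pd (grad p) x 0 j + ν 1 * pd (grad p) x 1 j)
        + lam * (pd (grad p) x 0 0 + pd (grad p) x 1 1) * ν j
        + mu * (pd (grad p) x 1 0 - pd (grad p) x 0 1) * (![-(ν 1), ν 0] j)
      -- = (λ+2μ)(Δp)ν + 2μ M(∂,ν)(∇p)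
      = (lam + 2 * mu) * (pd (grad p) x 0 0 + pd (grad p) x 1 1) * ν j
        + 2 * mu * (ν 0 * pd (grad p) x j 0 + ν 1 * pd (grad p) x j 1
            - ν j * (pd (grad p) x 0 0 + pd (grad p) x 1 1)) := by
  intro x hx j
  have hpx : ContDiffAt ℝ 2 p x := hp.contDiffAt (hU.mem_nhds hx)
  have hs := pd_grad_symm p x hpx
  fin_cases j <;> simp [hs 1 0] <;> ring
end

section
/- Let x = (x₁, x₂) : ℝ → ℝ² be twice continuously differentiable on a neighborhood of t with x'(t) ≠ 0, and set ν := (x₂'(t), −x₁'(t))/‖x'(t)‖. Then the limit as τ → t with τ ≠ t of ⟨ν, x(τ) − x(t)⟩ / ‖x(τ) − x(t)‖² exists and equals ⟨ν, x''(t)⟩ / (2‖x'(t)‖²). -/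
open Filter

theorem stmt15 (x : ℝ → EuclideanSpace ℝ (Fin 2)) (t : ℝ)
    (hx : ContDiffAt ℝ 2 x t) (hx' : deriv x t ≠ 0)
    (ν : EuclideanSpace ℝ (Fin 2))
    (hν : ν = ‖deriv x t‖⁻¹ •
      (WithLp.equiv 2 (Fin 2 → ℝ)).symm ![deriv x t 1, -(deriv x t 0)]) :
    Tendsto (fun τ => (inner ℝ ν (x τ - x t) : ℝ) / ‖x τ - x t‖ ^ 2)
      (nhdsWithin t {t}ᶜ)
      (nhds ((inner ℝ ν (iteratedDeriv 2 x t) : ℝ) / (2 * ‖deriv x t‖ ^ 2))) := by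
  set v := deriv x t with hv
  -- orthogonality of ν and the first derivative
  have hνv : (inner ℝ ν v : ℝ) = 0 := by
    rw [hν, real_inner_smul_left]
    have h2 : (inner ℝ ((WithLp.equiv 2 (Fin 2 → ℝ)).symm ![v 1, -(v 0)]) v : ℝ) = 0 := by
      simp [PiLp.inner_apply, Fin.sum_univ_two, WithLp.equiv_symm_apply, PiLp.toLp_apply]
      ring
    rw [h2, mul_zero]
  -- differentiability of x near t
  have hxev : ∀ᶠ τ in nhds t, DifferentiableAt ℝ x τ :=
    (hx.eventually (by norm_num)).mono fun y hy => hy.differentiableAt (by norm_num)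
  have hxd : DifferentiableAt ℝ x t := hx.differentiableAt (by norm_num)
  -- differentiability of deriv x at t
  have hder2 : DifferentiableAt ℝ (deriv x) t := by
    obtain ⟨u, hu, hcd⟩ := hx.contDiffOn le_rfl (by norm_num)
    obtain ⟨s, hsu, hs, hts⟩ := mem_nhds_iff.mp hu
    have hcds : ContDiffOn ℝ ((1 : WithTop ℕ∞) + 1) x s := by
      have h21 : (1 : WithTop ℕ∞) + 1 = 2 := by norm_num
      rw [h21]; exact hcd.mono hsu
    rw [contDiffOn_succ_iff_deriv_of_isOpen hs] at hcds
    exact (hcds.2.2.differentiableOn (by norm_num)).differentiableAt (hs.mem_nhds hts)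
  have hx'' : HasDerivAt (deriv x) (iteratedDeriv 2 x t) t := by
    have h : iteratedDeriv 2 x t = deriv (deriv x) t := by
      simp [show (2 : ℕ) = 1 + 1 from rfl, iteratedDeriv_succ, iteratedDeriv_one]
    rw [h]
    exact hder2.hasDerivAt
  set c : ℝ := inner ℝ ν (iteratedDeriv 2 x t) with hc
  -- numerator limit via L'Hôpital
  have hnum : Tendsto (fun τ => (inner ℝ ν (x τ - x t) : ℝ) / (τ - t) ^ 2)
      (nhdsWithin t {t}ᶜ) (nhds (c / 2)) := by
    apply HasDerivAt.lhopital_zero_nhdsNE (f' := fun τ => (inner ℝ ν (deriv x τ) : ℝ))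
      (g' := fun τ => 2 * (τ - t))
    · filter_upwards [hxev.filter_mono nhdsWithin_le_nhds] with τ hτ
      have h1 : HasDerivAt (fun y => x y - x t) (deriv x τ) τ := hτ.hasDerivAt.sub_const (x t)
      simpa [Function.comp_def] using (innerSL ℝ ν).hasFDerivAt.comp_hasDerivAt τ h1
    · filter_upwards with τ
      simpa [mul_comm] using (((hasDerivAt_id τ).sub_const t).fun_pow 2)
    · filter_upwards [self_mem_nhdsWithin] with τ hτ
      have h0 : τ - t ≠ 0 := sub_ne_zero.mpr hτ
      positivity
    · have hcont : ContinuousAt (fun τ => (inner ℝ ν (x τ - x t) : ℝ)) t :=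
        ((innerSL ℝ ν).continuous.continuousAt).comp (hxd.continuousAt.sub continuousAt_const)
      have := hcont.tendsto
      simp only [sub_self, inner_zero_right] at this
      exact this.mono_left nhdsWithin_le_nhds
    · have h0 : Tendsto (fun τ : ℝ => (τ - t) ^ 2) (nhds t) (nhds ((t - t) ^ 2)) :=
        (tendsto_id.sub tendsto_const_nhds).pow 2
      norm_num at h0
      exact h0.mono_left nhdsWithin_le_nhds
    · -- f'/g' limit
      have hψ : HasDerivAt (fun τ => (inner ℝ ν (deriv x τ) : ℝ)) c t := by
        simpa [Function.comp_def, hc] using (innerSL ℝ ν).hasFDerivAt.comp_hasDerivAt t hx''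
      have hsl := hasDerivAt_iff_tendsto_slope.mp hψ
      have hsl2 : Tendsto (fun τ => (inner ℝ ν (deriv x τ) : ℝ) / (τ - t))
          (nhdsWithin t {t}ᶜ) (nhds c) := by
        refine hsl.congr' ?_
        filter_upwards [self_mem_nhdsWithin] with τ hτ
        simp only [slope_def_field]
        rw [← hv, hνv, sub_zero]
      have h3 := hsl2.div_const 2
      refine h3.congr fun τ => ?_
      rw [div_div, mul_comm]
  -- denominator limit
  have hslope : Tendsto (slope x t) (nhdsWithin t {t}ᶜ) (nhds v) :=
    hasDerivAt_iff_tendsto_slope.mp hxd.hasDerivAt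
  have hden : Tendsto (fun τ => ‖slope x t τ‖ ^ 2) (nhdsWithin t {t}ᶜ) (nhds (‖v‖ ^ 2)) :=
    hslope.norm.pow 2
  have hvne : (‖v‖ : ℝ) ^ 2 ≠ 0 := pow_ne_zero 2 (norm_ne_zero_iff.mpr hx')
  have hmain := hnum.div hden hvne
  have hval : c / 2 / ‖v‖ ^ 2 = c / (2 * ‖v‖ ^ 2) := by rw [div_div]
  rw [hval] at hmain
  refine hmain.congr' ?_
  filter_upwards [self_mem_nhdsWithin] with τ hτ
  have hτt : τ - t ≠ 0 := sub_ne_zero.mpr hτ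
  have hsq : ((τ - t) : ℝ) ^ 2 ≠ 0 := pow_ne_zero 2 hτt
  have hslnorm : ‖slope x t τ‖ ^ 2 = ‖x τ - x t‖ ^ 2 / (τ - t) ^ 2 := by
    have h1 : ‖slope x t τ‖ ^ 2 = |τ - t|⁻¹ ^ 2 * ‖x τ - x t‖ ^ 2 := by
      rw [slope_def_module, norm_smul, mul_pow, norm_inv, Real.norm_eq_abs]
    rw [h1, inv_pow, sq_abs, div_eq_mul_inv, mul_comm]
  simp only [Pi.div_apply]
  rw [hslnorm, div_div_div_comm, div_self hsq, div_one]
end
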